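/- There exists an absolute constant C > 0 such that for every probability distribution J on [0,1] × {0,1}, every valid post-processing class K, every κ ∈ K, and every v ∈ [0,1]: E_{(p,y)~J}[ 1[κ(p) ≥ v]·(y − p) ] ≤ C·√(CDL_K(J)). (The expectation on the left may be negative with arbitrarily large magnitude; only its positive part is bounded.) -/

import Mathlib

open MeasureTheory Set

noncomputable section

/-- Expected loss of prediction `p` when the outcome is `y ~ Bernoulli(q)`:
`ℓ(p,q) = q·ℓ(p,1) + (1−q)·ℓ(p,0)`. -/
def elos (ℓ : ℝ → ℝ → ℝ) (p q : ℝ) : ℝ := q * ℓ p 1 + (1 - q) * ℓ p 0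

/-- A loss is proper if truthful prediction minimizes expected loss. -/
def IsProper (ℓ : ℝ → ℝ → ℝ) : Prop :=
  ∀ p ∈ Icc (0:ℝ) 1, ∀ q ∈ Icc (0:ℝ) 1, elos ℓ q q ≤ elos ℓ p q

/-- The class `L*` of proper losses with `|ℓ(p,1) − ℓ(p,0)| ≤ 1`. -/
def Lstar (ℓ : ℝ → ℝ → ℝ) : Prop :=
  IsProper ℓ ∧ ∀ p ∈ Icc (0:ℝ) 1, |ℓ p 1 - ℓ p 0| ≤ 1

/-- Projection onto `[0,1]`. -/
def proj01 (x : ℝ) : ℝ := max 0 (min 1 x)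

/-- Calibration decision loss of `J` relative to the post-processing class `K`:
`sup` over `ℓ ∈ L*` and `κ ∈ K` of `E[ℓ(p,y) − ℓ(κ(p),y)]`. -/
def CDL (K : Set (ℝ → ℝ)) (J : Measure (ℝ × ℝ)) : ℝ :=
  sSup { x | ∃ ℓ κ, Lstar ℓ ∧ κ ∈ K ∧
    x = ∫ z, (ℓ z.1 z.2 - ℓ (κ z.1) z.2) ∂J }

/-- `sign_s(t)`: `+1` if `t > 0`, `−1` if `t < 0`, and `s` if `t = 0`. -/
def signS (s t : ℝ) : ℝ := if 0 < t then 1 else if t < 0 then -1 else s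

/-- `sign₊ = sign_{+1}`. -/
def signP (t : ℝ) : ℝ := signS 1 t

/-- The V-shaped loss `ℓ_{v,s}(p,y) = −sign_s(p−v)·(y−v)`. -/
def vloss (v s : ℝ) : ℝ → ℝ → ℝ := fun p y => -(signS s (p - v)) * (y - v)

/-- A valid post-processing class: maps `[0,1]` to `[0,1]`, contains the identity, and
is translation invariant. -/
def ValidClass (K : Set (ℝ → ℝ)) : Prop :=
  (∀ κ ∈ K, ∀ p ∈ Icc (0:ℝ) 1, κ p ∈ Icc (0:ℝ) 1) ∧
  ((fun p : ℝ => p) ∈ K) ∧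
  (∀ s t : ℝ, ∀ κ ∈ K, (fun p : ℝ => proj01 (κ (proj01 (p + s)) + t)) ∈ K)

/-- Upper thresholds of a post-processing class. -/
def thr (K : Set (ℝ → ℝ)) : Set (ℝ → ℝ) :=
  { w | ∃ κ ∈ K, w = fun p => signP (κ p - 1/2) }

/-- Modified thresholds: `thr(K)` together with all lower thresholds of the identity. -/
def thr' (K : Set (ℝ → ℝ)) : Set (ℝ → ℝ) :=
  thr K ∪ { w | ∃ v : ℝ, w = fun p => -signP (p - v) }

/-- Weight-restricted calibration error `CE_W(J) = sup_{w ∈ W} E[w(p)(y − p)]`. -/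
def CE (W : Set (ℝ → ℝ)) (J : Measure (ℝ × ℝ)) : ℝ :=
  sSup { x | ∃ w ∈ W, x = ∫ z, w z.1 * (z.2 - z.1) ∂J }

/-- A probability distribution on `[0,1] × {0,1}`. -/
def IsPredDist (J : Measure (ℝ × ℝ)) : Prop :=
  IsProbabilityMeasure J ∧ ∀ᵐ z ∂J, z.1 ∈ Icc (0:ℝ) 1 ∧ (z.2 = 0 ∨ z.2 = 1)

/-- The class `M₊` of nondecreasing post-processings `[0,1] → [0,1]`. -/
def Mplus : Set (ℝ → ℝ) :=
  { κ | (∀ p ∈ Icc (0:ℝ) 1, κ p ∈ Icc (0:ℝ) 1) ∧ MonotoneOn κ (Icc (0:ℝ) 1) }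

open Filter Topology
open scoped Classical

/-! ### helpers -/

lemma proj01_mem (x : ℝ) : proj01 x ∈ Icc (0:ℝ) 1 := by
  constructor
  · exact le_max_left _ _
  · simp only [proj01, max_le_iff]
    exact ⟨zero_le_one, min_le_left _ _⟩

lemma proj01_of_mem {x : ℝ} (h : x ∈ Icc (0:ℝ) 1) : proj01 x = x := by
  simp only [proj01, min_eq_right h.2, max_eq_right h.1]

lemma le_proj01_iff {b x : ℝ} (hb0 : 0 < b) (hb1 : b ≤ 1) : b ≤ proj01 x ↔ b ≤ x := by
  simp only [proj01, le_max_iff, le_min_iff]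
  constructor
  · rintro (h | ⟨h1, h2⟩)
    · linarith
    · exact h2
  · intro h
    exact Or.inr ⟨hb1, h⟩

lemma signS_one (x : ℝ) : signS 1 x = if 0 ≤ x then 1 else -1 := by
  unfold signS
  rcases lt_trichotomy x 0 with h | h | h
  · rw [if_neg (by linarith), if_pos h, if_neg (by linarith)]
  · subst h; norm_num
  · rw [if_pos h, if_pos (le_of_lt h)]

lemma signS_one_of_le {u x : ℝ} (h : u ≤ x) : signS 1 (x - u) = 1 := by
  rw [signS_one, if_pos (by linarith)]

lemma signS_one_of_lt {u x : ℝ} (h : x < u) : signS 1 (x - u) = -1 := by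
  rw [signS_one, if_neg (by intro hc; linarith)]

lemma elos_vloss (u p q : ℝ) : elos (vloss u 1) p q = -(signS 1 (p - u)) * (q - u) := by
  unfold elos vloss; ring

lemma lstar_vloss (u : ℝ) : Lstar (vloss u 1) := by
  constructor
  · intro p _ q _
    rw [elos_vloss, elos_vloss]
    rcases le_or_gt u q with h | h
    · rw [signS_one_of_le h]
      rcases le_or_gt u p with h2 | h2
      · rw [signS_one_of_le h2]
      · rw [signS_one_of_lt h2]; nlinarith
    · rw [signS_one_of_lt h]
      rcases le_or_gt u p with h2 | h2
      · rw [signS_one_of_le h2]; nlinarith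
      · rw [signS_one_of_lt h2]
  · intro p _
    unfold vloss
    have : -(signS 1 (p - u)) * (1 - u) - -(signS 1 (p - u)) * (0 - u) = -(signS 1 (p-u)) := by ring
    rw [this]
    rw [signS_one]
    split <;> norm_num

lemma vloss_sub (u p p' y : ℝ) :
    vloss u 1 p y - vloss u 1 p' y = (signS 1 (p' - u) - signS 1 (p - u)) * (y - u) := by
  unfold vloss; ring

/-! ### regret bound and CDL facts -/

lemma elos_eq (ℓ : ℝ → ℝ → ℝ) (p q : ℝ) :
    elos ℓ p q = elos ℓ p p + (q - p) * (ℓ p 1 - ℓ p 0) := by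
  unfold elos; ring

lemma regret_le {ℓ : ℝ → ℝ → ℝ} (hl : Lstar ℓ) {p q y : ℝ}
    (hp : p ∈ Icc (0:ℝ) 1) (hq : q ∈ Icc (0:ℝ) 1) (hy : y = 0 ∨ y = 1) :
    ℓ p y - ℓ q y ≤ 2 := by
  have hyI : y ∈ Icc (0:ℝ) 1 := by rcases hy with h | h <;> subst h <;> norm_num
  have h1 : ℓ p y = elos ℓ p y := by rcases hy with h | h <;> subst h <;> unfold elos <;> ring
  have h2 : ℓ q y = elos ℓ q y := by rcases hy with h | h <;> subst h <;> unfold elos <;> ring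
  have hq1 : elos ℓ y y ≤ elos ℓ q y := hl.1 q hq y hyI
  have hp1 : elos ℓ p p ≤ elos ℓ y p := hl.1 y hyI p hp
  have e1 : elos ℓ p y = elos ℓ p p + (y - p) * (ℓ p 1 - ℓ p 0) := elos_eq ℓ p y
  have e2 : elos ℓ y p = elos ℓ y y + (p - y) * (ℓ y 1 - ℓ y 0) := elos_eq ℓ y p
  have hdp := hl.2 p hp
  have hdy := hl.2 y hyI
  have habs : |p - y| ≤ 1 := by
    rw [abs_le]; constructor <;> [linarith [hp.1, hp.2, hyI.1, hyI.2]; linarith [hp.1, hp.2, hyI.1, hyI.2]]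
  have b1 : (y - p) * (ℓ p 1 - ℓ p 0) ≤ |p - y| := by
    calc (y - p) * (ℓ p 1 - ℓ p 0) ≤ |(y - p) * (ℓ p 1 - ℓ p 0)| := le_abs_self _
    _ = |y - p| * |ℓ p 1 - ℓ p 0| := abs_mul _ _
    _ ≤ |y - p| * 1 := by
        apply mul_le_mul_of_nonneg_left hdp (abs_nonneg _)
    _ = |p - y| := by rw [mul_one, abs_sub_comm]
  have b2 : (p - y) * (ℓ y 1 - ℓ y 0) ≤ |p - y| := by
    calc (p - y) * (ℓ y 1 - ℓ y 0) ≤ |(p - y) * (ℓ y 1 - ℓ y 0)| := le_abs_self _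
    _ = |p - y| * |ℓ y 1 - ℓ y 0| := abs_mul _ _
    _ ≤ |p - y| * 1 := by
        apply mul_le_mul_of_nonneg_left hdy (abs_nonneg _)
    _ = |p - y| := mul_one _
  linarith


/-! CDL facts -/

def CDLset (K : Set (ℝ → ℝ)) (J : Measure (ℝ × ℝ)) : Set ℝ :=
  { x | ∃ ℓ κ, Lstar ℓ ∧ κ ∈ K ∧ x = ∫ z, (ℓ z.1 z.2 - ℓ (κ z.1) z.2) ∂J }

lemma CDL_eq_sSup (K : Set (ℝ → ℝ)) (J : Measure (ℝ × ℝ)) : CDL K J = sSup (CDLset K J) := rfl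

lemma zero_mem_CDLset {K : Set (ℝ → ℝ)} (hK : ValidClass K) (J : Measure (ℝ × ℝ)) :
    (0:ℝ) ∈ CDLset K J := by
  refine ⟨fun _ _ => 0, fun p => p, ?_, hK.2.1, by simp⟩
  constructor
  · intro p _ q _; simp [elos]
  · intro p _; simp

lemma CDLset_le_two {K : Set (ℝ → ℝ)} {J : Measure (ℝ × ℝ)}
    (hJ : IsPredDist J) (hK : ValidClass K) : ∀ x ∈ CDLset K J, x ≤ 2 := by
  rintro x ⟨ℓ, κ, hl, hκ, rfl⟩
  haveI : IsProbabilityMeasure J := hJ.1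
  by_cases hint : Integrable (fun z : ℝ × ℝ => ℓ z.1 z.2 - ℓ (κ z.1) z.2) J
  · have h2 : (fun z : ℝ × ℝ => ℓ z.1 z.2 - ℓ (κ z.1) z.2) ≤ᵐ[J] (fun _ => (2:ℝ)) := by
      filter_upwards [hJ.2] with z hz
      exact regret_le hl hz.1 (hK.1 κ hκ z.1 hz.1) hz.2
    calc ∫ z, (ℓ z.1 z.2 - ℓ (κ z.1) z.2) ∂J ≤ ∫ _, (2:ℝ) ∂J :=
          integral_mono_ae hint (integrable_const 2) h2
    _ = 2 := by simp [integral_const]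
  · rw [integral_undef hint]; norm_num

lemma CDLset_bddAbove {K : Set (ℝ → ℝ)} {J : Measure (ℝ × ℝ)}
    (hJ : IsPredDist J) (hK : ValidClass K) : BddAbove (CDLset K J) :=
  ⟨2, fun _ hx => CDLset_le_two hJ hK _ hx⟩

lemma le_CDL {K : Set (ℝ → ℝ)} {J : Measure (ℝ × ℝ)}
    (hJ : IsPredDist J) (hK : ValidClass K) {x : ℝ} (hx : x ∈ CDLset K J) :
    x ≤ CDL K J :=
  le_csSup (CDLset_bddAbove hJ hK) hx

lemma CDL_nonneg {K : Set (ℝ → ℝ)} {J : Measure (ℝ × ℝ)}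
    (hJ : IsPredDist J) (hK : ValidClass K) : 0 ≤ CDL K J :=
  le_CDL hJ hK (zero_mem_CDLset hK J)

/-! ### block lemmas -/

lemma signS_one_sub (u x : ℝ) : signS 1 (x - u) = if u ≤ x then 1 else -1 := by
  rw [signS_one]
  rcases le_or_gt u x with h | h
  · rw [if_pos (by linarith), if_pos h]
  · rw [if_neg (by intro hc; linarith), if_neg (not_le.2 h)]

lemma signdiff (P Q : Prop) [Decidable P] [Decidable Q] :
    (if P then (1:ℝ) else -1) - (if Q then 1 else -1) =
      2 * ((if P then (1:ℝ) else 0) - (if Q then 1 else 0)) := by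
  by_cases hP : P <;> by_cases hQ : Q <;> simp [hP, hQ] <;> ring

/-- The weight function `w(p) = 1[v ≤ κ(p)]`. -/
def wA (κ : ℝ → ℝ) (v : ℝ) : ℝ × ℝ → ℝ :=
  fun z => Set.indicator {p : ℝ | v ≤ κ p} (fun _ => (1:ℝ)) z.1

lemma wA_eq (κ : ℝ → ℝ) (v : ℝ) (z : ℝ × ℝ) :
    wA κ v z = if v ≤ κ z.1 then 1 else 0 := by
  rw [wA, Set.indicator_apply]
  rfl

def indI (S : Set ℝ) : ℝ × ℝ → ℝ := fun z => S.indicator (fun _ => (1:ℝ)) z.1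

lemma indI_eq (S : Set ℝ) (z : ℝ × ℝ) : indI S z = if z.1 ∈ S then 1 else 0 := by
  rw [indI, Set.indicator_apply]

variable {K : Set (ℝ → ℝ)} {J : Measure (ℝ × ℝ)}

lemma block_IdN (hJ : IsPredDist J) (hK : ValidClass K)
    {a b : ℝ} (hab : a ≤ b) (hb1 : b ≤ 1) (hb0 : 0 < b) :
    ∫ z, indI (Ico a b) z * (z.2 - b) ∂J ≤ CDL K J / 2 := by
  set κ'' := fun p : ℝ => proj01 ((fun q : ℝ => q) (proj01 (p + 0)) + (b - a)) with hκ''def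
  have hκ'' : κ'' ∈ K := hK.2.2 0 (b - a) _ hK.2.1
  have hmem : (∫ z, (vloss b 1 z.1 z.2 - vloss b 1 (κ'' z.1) z.2) ∂J) ∈ CDLset K J :=
    ⟨vloss b 1, κ'', lstar_vloss b, hκ'', rfl⟩
  have hxle := le_CDL hJ hK hmem
  have key : ∫ z, (vloss b 1 z.1 z.2 - vloss b 1 (κ'' z.1) z.2) ∂J
      = 2 * ∫ z, indI (Ico a b) z * (z.2 - b) ∂J := by
    rw [← integral_const_mul]
    apply integral_congr_ae
    filter_upwards [hJ.2] with z hz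
    have hz1 := hz.1
    rw [vloss_sub]
    have e1 : κ'' z.1 = proj01 (z.1 + (b - a)) := by
      simp only [hκ''def, add_zero, proj01_of_mem hz1]
    have e2 : signS 1 (κ'' z.1 - b) = if a ≤ z.1 then 1 else -1 := by
      rw [e1, signS_one_sub]
      rcases le_or_gt a z.1 with h | h
      · rw [if_pos ((le_proj01_iff hb0 hb1).2 (by linarith)), if_pos h]
      · rw [if_neg, if_neg (not_le.2 h)]
        intro hc
        have := (le_proj01_iff hb0 hb1).1 hc
        linarith
    rw [e2, signS_one_sub, signdiff, indI_eq]
    by_cases h1 : a ≤ z.1 <;> by_cases h2 : b ≤ z.1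
    · rw [if_pos h1, if_pos h2, if_neg (fun hc => absurd hc.2 (not_lt.2 h2))]; ring
    · rw [if_pos h1, if_neg h2, if_pos (Set.mem_Ico.2 ⟨h1, not_le.1 h2⟩)]; ring
    · exact absurd (le_trans hab h2) h1
    · rw [if_neg h1, if_neg h2,
        if_neg (fun hc => absurd hc.1 h1)]; ring
  linarith

lemma clamp_eval {p α β : ℝ} (hp0 : 0 ≤ p) (hp1 : p ≤ 1) (h0 : 0 ≤ α) (hαβ : α ≤ β) (hβ1 : β ≤ 1) :
    proj01 (proj01 (proj01 (proj01 (p + (1 - β)) + (β - 1)) + (-α)) + α) = max α (min β p) := by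
  have e1 : proj01 (p + (1 - β)) = min 1 (p + (1 - β)) := by
    simp only [proj01]
    rw [max_eq_right]
    simp only [le_min_iff]
    constructor <;> linarith
  have e2 : min 1 (p + (1 - β)) + (β - 1) = min β p := by
    rcases le_total 1 (p + (1 - β)) with h | h
    · rw [min_eq_left h, min_eq_left (by linarith)]; ring
    · rw [min_eq_right h, min_eq_right (by linarith)]; ring
  have e3 : proj01 (min β p) = min β p :=
    proj01_of_mem ⟨le_min (by linarith) hp0, min_le_of_left_le hβ1⟩
  have e4 : proj01 (min β p + (-α)) = max 0 (min β p + (-α)) := by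
    have h : min β p + -α ≤ 1 := by
      have : min β p ≤ β := min_le_left _ _
      linarith
    simp only [proj01, min_eq_right h]
  have e5 : max 0 (min β p + (-α)) + α = max α (min β p) := by
    rcases le_total 0 (min β p + (-α)) with h | h
    · rw [max_eq_right h, max_eq_right (by linarith)]; ring
    · rw [max_eq_left h, max_eq_left (by linarith)]; ring
  have e6 : proj01 (max α (min β p)) = max α (min β p) := by
    apply proj01_of_mem
    exact ⟨le_max_left _ _ |>.trans' h0, max_le (hαβ.trans hβ1) (min_le_of_left_le hβ1)⟩
  rw [e1, e2, e3, e4, e5, e6]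

lemma block_CL (hJ : IsPredDist J) (hK : ValidClass K)
    {κ : ℝ → ℝ} (hκ : κ ∈ K) {v α β u' : ℝ}
    (h0 : 0 ≤ α) (hαβ : α ≤ β) (hβu : β < u') (hu1 : u' ≤ 1)
    (hκα : κ α < v) (hκβ : v ≤ κ β) :
    ∫ z, (wA κ v z * indI (Icc α β) z + indI (Ioo β u') z) * (z.2 - u') ∂J
      ≤ CDL K J / 2 := by
  have hu0 : 0 < u' := lt_of_le_of_lt (le_trans h0 hαβ) hβu
  have hβ1 : β ≤ 1 := le_trans (le_of_lt hβu) hu1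
  set κ1 := fun p : ℝ => proj01 (κ (proj01 (p + α)) + (u' - v)) with hk1
  set κ2 := fun p : ℝ => proj01 (κ1 (proj01 (p + (-α))) + 0) with hk2
  set κ3 := fun p : ℝ => proj01 (κ2 (proj01 (p + (β - 1))) + 0) with hk3
  set κ4 := fun p : ℝ => proj01 (κ3 (proj01 (p + (1 - β))) + 0) with hk4
  have hκ4 : κ4 ∈ K := hK.2.2 _ _ _ (hK.2.2 _ _ _ (hK.2.2 _ _ _ (hK.2.2 _ _ _ hκ)))
  have hmem : (∫ z, (vloss u' 1 z.1 z.2 - vloss u' 1 (κ4 z.1) z.2) ∂J) ∈ CDLset K J :=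
    ⟨vloss u' 1, κ4, lstar_vloss u', hκ4, rfl⟩
  have hxle := le_CDL hJ hK hmem
  have keval : ∀ p : ℝ, 0 ≤ p → p ≤ 1 →
      κ4 p = proj01 (κ (max α (min β p)) + (u' - v)) := by
    intro p hp0 hp1
    have hc := clamp_eval hp0 hp1 h0 hαβ hβ1
    simp only [hk4, hk3, hk2, hk1, add_zero] at *
    -- unfold: κ4 p = proj01 (κ3 (proj01 (p + (1-β))))
    have w1 : ∀ x : ℝ, proj01 (proj01 x) = proj01 x := fun x => proj01_of_mem (proj01_mem x)
    rw [w1, w1, w1]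
    rw [← hc]
  have key : ∫ z, (vloss u' 1 z.1 z.2 - vloss u' 1 (κ4 z.1) z.2) ∂J
      = 2 * ∫ z, (wA κ v z * indI (Icc α β) z + indI (Ioo β u') z) * (z.2 - u') ∂J := by
    rw [← integral_const_mul]
    apply integral_congr_ae
    filter_upwards [hJ.2] with z hz
    have hz1 := hz.1
    rw [vloss_sub]
    set p := z.1 with hp
    have e1 : κ4 p = proj01 (κ (max α (min β p)) + (u' - v)) := keval p hz1.1 hz1.2
    have e2 : signS 1 (κ4 p - u') = if v ≤ κ (max α (min β p)) then 1 else -1 := by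
      rw [e1, signS_one_sub]
      rcases le_or_gt v (κ (max α (min β p))) with h | h
      · rw [if_pos ((le_proj01_iff hu0 hu1).2 (by linarith)), if_pos h]
      · rw [if_neg, if_neg (not_le.2 h)]
        intro hc
        have := (le_proj01_iff hu0 hu1).1 hc
        linarith
    rw [e2, signS_one_sub, signdiff, wA_eq, indI_eq, indI_eq]
    have goal2 : (if v ≤ κ (max α (min β p)) then (1:ℝ) else 0) - (if u' ≤ p then 1 else 0)
        = (if v ≤ κ p then (1:ℝ) else 0) * (if p ∈ Icc α β then 1 else 0)
          + (if p ∈ Ioo β u' then (1:ℝ) else 0) := by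
      rcases lt_trichotomy p α with hpα | hpα | hpα
      · have hm : max α (min β p) = α := by
          rw [min_eq_right (by linarith), max_eq_left (le_of_lt hpα)]
        rw [hm, if_neg (not_le.2 hκα), if_neg (show ¬ u' ≤ p by intro hc; linarith),
          if_neg (show ¬ p ∈ Icc α β from fun hc => absurd hc.1 (not_le.2 hpα)),
          if_neg (show ¬ p ∈ Ioo β u' from fun hc => by have := hc.1; linarith)]
        ring
      · have hpβ : p ≤ β := by rw [hpα]; exact hαβ
        have hm : max α (min β p) = α := by
          rw [min_eq_right hpβ, max_eq_left (le_of_eq hpα)]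
        have h1 : ¬ v ≤ κ p := by rw [hpα]; exact not_le.2 hκα
        rw [hm, if_neg (not_le.2 hκα), if_neg h1,
          if_neg (show ¬ u' ≤ p by rw [hpα]; intro hc; linarith),
          if_neg (show ¬ p ∈ Ioo β u' from fun hc => by have := hc.1; linarith)]
        ring
      · rcases le_or_gt p β with hpβ | hpβ
        · have hm : max α (min β p) = p := by
            rw [min_eq_right hpβ, max_eq_right (le_of_lt hpα)]
          rw [hm, if_neg (show ¬ u' ≤ p by intro hc; linarith),
            if_pos (Set.mem_Icc.2 ⟨le_of_lt hpα, hpβ⟩),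
            if_neg (show ¬ p ∈ Ioo β u' from fun hc => by have := hc.1; linarith)]
          ring
        · have hm : max α (min β p) = β := by
            rw [min_eq_left (le_of_lt hpβ), max_eq_right hαβ]
          rw [hm, if_pos hκβ,
            if_neg (show ¬ p ∈ Icc α β from fun hc => absurd hc.2 (not_le.2 hpβ))]
          rcases le_or_gt u' p with hup | hup
          · rw [if_pos hup,
              if_neg (show ¬ p ∈ Ioo β u' from fun hc => absurd hc.2 (not_lt.2 hup))]
            ring
          · rw [if_neg (not_le.2 hup), if_pos (Set.mem_Ioo.2 ⟨hpβ, hup⟩)]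
            ring
    rw [goal2, ← hp]
    ring
  linarith

lemma wA_nonneg (z : ℝ × ℝ) : 0 ≤ wA κ v z := by
  unfold wA; exact Set.indicator_nonneg (fun _ _ => zero_le_one) _

lemma wA_le_one (z : ℝ × ℝ) : wA κ v z ≤ 1 := by
  unfold wA; rw [Set.indicator_apply]; split <;> norm_num

lemma indI_nonneg (S : Set ℝ) (z : ℝ × ℝ) : 0 ≤ indI S z := by
  unfold indI; exact Set.indicator_nonneg (fun _ _ => zero_le_one) _

lemma indI_le_one (S : Set ℝ) (z : ℝ × ℝ) : indI S z ≤ 1 := by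
  unfold indI; rw [Set.indicator_apply]; split <;> norm_num

lemma meas_indI {S : Set ℝ} (hS : MeasurableSet S) : Measurable (indI S) :=
  ((measurable_const.indicator hS).comp measurable_fst)

lemma integrable_of_bdd (hP : IsProbabilityMeasure J) {g : ℝ × ℝ → ℝ}
    (hg : AEStronglyMeasurable g J) {c : ℝ} (hb : ∀ᵐ z ∂J, |g z| ≤ c) :
    Integrable g J :=
  Integrable.mono' (integrable_const c) hg (by filter_upwards [hb] with z h; simpa using h)

/-- Extraction of a.e.-measurability of the weight from integrability of the target. -/
lemma wA_aesm (hJ : IsPredDist J)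
    (hf : AEStronglyMeasurable (fun z => wA κ v z * (z.2 - z.1)) J) :
    AEStronglyMeasurable (wA κ v) J := by
  obtain ⟨f', hf'm, hf'e⟩ := hf
  set g : ℝ × ℝ → ℝ := fun z =>
    if z.1 = 0 then wA κ v (0, 0) else
      if z.1 = 1 then wA κ v (1, 0) else f' z / (z.2 - z.1) with hg
  have hgm : Measurable g := by
    apply Measurable.ite (measurable_fst (measurableSet_singleton (0:ℝ))) measurable_const
    apply Measurable.ite (measurable_fst (measurableSet_singleton (1:ℝ))) measurable_const
    exact hf'm.measurable.div (measurable_snd.sub measurable_fst)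
  refine ⟨g, hgm.stronglyMeasurable, ?_⟩
  filter_upwards [hf'e, hJ.2] with z he hz
  by_cases h0 : z.1 = 0
  · simp only [hg, if_pos h0]
    show wA κ v z = wA κ v (0, 0)
    unfold wA; rw [h0]
  · by_cases h1 : z.1 = 1
    · simp only [hg, if_neg h0, if_pos h1]
      show wA κ v z = wA κ v (1, 0)
      unfold wA; rw [h1]
    · have hne : z.2 - z.1 ≠ 0 := by
        rcases hz.2 with h | h <;> rw [h] <;> intro hc
        · apply h0; linarith
        · apply h1; linarith
      simp only [hg, if_neg h0, if_neg h1]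
      rw [← he, mul_div_assoc, div_self hne, mul_one]

/-- Right-selection: small mass just to the right of `x₀`. -/
lemma sel_right (hJ : IsPredDist J) {W : ℝ × ℝ → ℝ} (hW : AEStronglyMeasurable W J)
    (hW0 : ∀ z, 0 ≤ W z) (hW1 : ∀ z, W z ≤ 1) {x₀ m τ : ℝ} (hxm : x₀ < m) (hτ : 0 < τ) :
    ∃ c, x₀ < c ∧ c ≤ m ∧ ∫ z, W z * indI (Ioo x₀ c) z ∂J ≤ τ := by
  haveI := hJ.1
  set c' : ℕ → ℝ := fun n => x₀ + (m - x₀) / (n + 1) with hc'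
  have hc'pos : ∀ n : ℕ, x₀ < c' n := by
    intro n
    have : 0 < (m - x₀) / (n + 1) := div_pos (by linarith) (by positivity)
    simp only [hc']; linarith
  have hc'le : ∀ n : ℕ, c' n ≤ m := by
    intro n
    have h1 : (m - x₀) / (n + 1) ≤ (m - x₀) / 1 := by
      apply div_le_div_of_nonneg_left (by linarith) one_pos
      exact_mod_cast Nat.succ_le_succ (Nat.zero_le n)
    simp only [hc', div_one] at *
    linarith
  have hlim : Tendsto (fun n => ∫ z, W z * indI (Ioo x₀ (c' n)) z ∂J) atTop (𝓝 0) := by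
    have h0 : (0 : ℝ) = ∫ _z, (0:ℝ) ∂J := by simp
    rw [h0]
    apply tendsto_integral_of_dominated_convergence (fun _ => (1:ℝ))
    · intro n
      exact hW.mul (meas_indI measurableSet_Ioo).aestronglyMeasurable
    · exact integrable_const 1
    · intro n
      apply Eventually.of_forall
      intro z
      have h1 := hW0 z; have h2 := hW1 z
      have h3 := indI_nonneg (Ioo x₀ (c' n)) z
      have h4 := indI_le_one (Ioo x₀ (c' n)) z
      rw [Real.norm_eq_abs, abs_of_nonneg (mul_nonneg h1 h3)]
      nlinarith
    · apply Eventually.of_forall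
      intro z
      apply tendsto_nhds_of_eventually_eq
      rcases le_or_gt z.1 x₀ with h | h
      · apply Eventually.of_forall
        intro n
        have : z.1 ∉ Ioo x₀ (c' n) := fun hc => absurd hc.1 (not_lt.2 h)
        simp only [indI, Set.indicator_of_notMem this, mul_zero]
      · obtain ⟨N, hN⟩ := exists_nat_gt ((m - x₀) / (z.1 - x₀))
        rw [eventually_atTop]
        refine ⟨N, fun n hn => ?_⟩
        have hlt : (m - x₀) / (n + 1) < z.1 - x₀ := by
          rw [div_lt_iff₀ (by positivity)]
          have h5 : (m - x₀) / (z.1 - x₀) < n + 1 := by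
            calc (m - x₀) / (z.1 - x₀) < N := hN
            _ ≤ n := by exact_mod_cast hn
            _ ≤ n + 1 := by linarith
          calc m - x₀ = ((m - x₀) / (z.1 - x₀)) * (z.1 - x₀) := by
                rw [div_mul_cancel₀]
                intro hc; linarith
          _ < (n + 1) * (z.1 - x₀) := by
                apply mul_lt_mul_of_pos_right h5 (by linarith)
          _ = (z.1 - x₀) * (n + 1) := by ring
        have : z.1 ∉ Ioo x₀ (c' n) := by
          intro hc
          have := hc.2
          simp only [hc'] at this
          linarith
        simp only [indI, Set.indicator_of_notMem this, mul_zero]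
  have hev := hlim.eventually (eventually_le_nhds hτ)
  obtain ⟨n, hn⟩ := hev.exists
  exact ⟨c' n, hc'pos n, hc'le n, hn⟩

/-- Left-selection: small mass just to the left of `x₀`. -/
lemma sel_left (hJ : IsPredDist J) {W : ℝ × ℝ → ℝ} (hW : AEStronglyMeasurable W J)
    (hW0 : ∀ z, 0 ≤ W z) (hW1 : ∀ z, W z ≤ 1) {x₀ m τ : ℝ} (hxm : m < x₀) (hτ : 0 < τ) :
    ∃ c, m ≤ c ∧ c < x₀ ∧ ∫ z, W z * indI (Ioo c x₀) z ∂J ≤ τ := by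
  haveI := hJ.1
  set c' : ℕ → ℝ := fun n => x₀ - (x₀ - m) / (n + 1) with hc'
  have hc'pos : ∀ n : ℕ, c' n < x₀ := by
    intro n
    have : 0 < (x₀ - m) / (n + 1) := div_pos (by linarith) (by positivity)
    simp only [hc']; linarith
  have hc'le : ∀ n : ℕ, m ≤ c' n := by
    intro n
    have h1 : (x₀ - m) / (n + 1) ≤ (x₀ - m) / 1 := by
      apply div_le_div_of_nonneg_left (by linarith) one_pos
      exact_mod_cast Nat.succ_le_succ (Nat.zero_le n)
    simp only [hc', div_one] at *
    linarith
  have hlim : Tendsto (fun n => ∫ z, W z * indI (Ioo (c' n) x₀) z ∂J) atTop (𝓝 0) := by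
    have h0 : (0 : ℝ) = ∫ _z, (0:ℝ) ∂J := by simp
    rw [h0]
    apply tendsto_integral_of_dominated_convergence (fun _ => (1:ℝ))
    · intro n
      exact hW.mul (meas_indI measurableSet_Ioo).aestronglyMeasurable
    · exact integrable_const 1
    · intro n
      apply Eventually.of_forall
      intro z
      have h1 := hW0 z; have h2 := hW1 z
      have h3 := indI_nonneg (Ioo (c' n) x₀) z
      have h4 := indI_le_one (Ioo (c' n) x₀) z
      rw [Real.norm_eq_abs, abs_of_nonneg (mul_nonneg h1 h3)]
      nlinarith
    · apply Eventually.of_forall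
      intro z
      apply tendsto_nhds_of_eventually_eq
      rcases le_or_gt x₀ z.1 with h | h
      · apply Eventually.of_forall
        intro n
        have : z.1 ∉ Ioo (c' n) x₀ := fun hc => absurd hc.2 (not_lt.2 h)
        simp only [indI, Set.indicator_of_notMem this, mul_zero]
      · obtain ⟨N, hN⟩ := exists_nat_gt ((x₀ - m) / (x₀ - z.1))
        rw [eventually_atTop]
        refine ⟨N, fun n hn => ?_⟩
        have hlt : (x₀ - m) / (n + 1) < x₀ - z.1 := by
          rw [div_lt_iff₀ (by positivity)]
          have h5 : (x₀ - m) / (x₀ - z.1) < n + 1 := by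
            calc (x₀ - m) / (x₀ - z.1) < N := hN
            _ ≤ n := by exact_mod_cast hn
            _ ≤ n + 1 := by linarith
          calc x₀ - m = ((x₀ - m) / (x₀ - z.1)) * (x₀ - z.1) := by
                rw [div_mul_cancel₀]
                intro hc; linarith
          _ < (n + 1) * (x₀ - z.1) := by
                apply mul_lt_mul_of_pos_right h5 (by linarith)
          _ = (x₀ - z.1) * (n + 1) := by ring
        have : z.1 ∉ Ioo (c' n) x₀ := by
          intro hc
          have := hc.1
          simp only [hc'] at this
          linarith
        simp only [indI, Set.indicator_of_notMem this, mul_zero]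
  have hev := hlim.eventually (eventually_le_nhds hτ)
  obtain ⟨n, hn⟩ := hev.exists
  exact ⟨c' n, hc'le n, hc'pos n, hn⟩


/-- real-valued indicator of a proposition (with a fixed classical instance) -/
def cind (P : Prop) : ℝ := if P then 1 else 0

lemma cind_pos {P : Prop} (h : P) : cind P = 1 := if_pos h
lemma cind_neg {P : Prop} (h : ¬ P) : cind P = 0 := if_neg h
lemma cind_nonneg (P : Prop) : 0 ≤ cind P := by unfold cind; split <;> norm_num
lemma cind_le_one (P : Prop) : cind P ≤ 1 := by unfold cind; split <;> norm_num

set_option maxHeartbeats 1000000 in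
/-- Master pointwise inequality for one window. -/
lemma window_pointwise
    (x y w s t u b' α β u' δ τ : ℝ)
    (hx : 0 ≤ x) (hy0 : 0 ≤ y) (hy1 : y ≤ 1) (hw : w = 0 ∨ w = 1)
    (hs : 0 ≤ s) (hsu : s ≤ u) (hub : u ≤ b') (hbα : b' ≤ α) (hαβ : α ≤ β)
    (hβu' : β < u') (hu'1 : u' ≤ 1) (hut : u < t) (htsδ : t - s ≤ δ)
    (hαt : α < t) (hβt : β < t) (hu'β : u' ≤ β + τ)
    (H1 : s ≤ x → x < u → w = 1)
    (H2 : x = u → w = 1 → u < b')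
    (H2' : x = u → w = 0 → b' ≤ u) :
    w * cind (x ∈ Ico s t) * (y - x) ≤
      cind (x ∈ Ico s b') * (y - b')
      + (w * cind (x ∈ Icc α β) + cind (x ∈ Ioo β u')) * (y - u')
      + (δ + τ) * cind (x ∈ Ico s t)
      + cind (x ∈ Ioo u b')
      + w * cind (x ∈ Ioo u α)
      + cind (x ∈ Ioo β u')
      + w * cind (x ∈ Ioo β t) := by
  have hw0 : 0 ≤ w := by rcases hw with h | h <;> simp [h]
  have hw1 : w ≤ 1 := by rcases hw with h | h <;> simp [h]
  have hb't : b' < t := lt_of_le_of_lt hbα hαt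
  have hb'1 : b' ≤ 1 := le_of_lt (lt_of_le_of_lt hbα (lt_of_le_of_lt hαβ (lt_of_lt_of_le hβu' hu'1)))
  by_cases hIC : x ∈ Ico s t
  swap
  · -- outside the window
    rw [cind_neg hIC]
    have e1 : cind (x ∈ Ico s b') = 0 :=
      cind_neg (fun hc => hIC ⟨hc.1, lt_of_lt_of_le hc.2 (le_of_lt hb't)⟩)
    have e2 : cind (x ∈ Icc α β) = 0 :=
      cind_neg (fun hc => hIC ⟨le_trans (le_trans hsu hub |>.trans hbα) hc.1,
        lt_of_le_of_lt hc.2 hβt⟩)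
    have e3 : cind (x ∈ Ioo u b') = 0 :=
      cind_neg (fun hc => hIC ⟨le_trans hsu (le_of_lt hc.1), lt_trans hc.2 hb't⟩)
    have e4 : cind (x ∈ Ioo u α) = 0 :=
      cind_neg (fun hc => hIC ⟨le_trans hsu (le_of_lt hc.1), lt_trans hc.2 hαt⟩)
    have e5 : cind (x ∈ Ioo β t) = 0 :=
      cind_neg (fun hc => hIC ⟨le_trans (le_trans (le_trans hsu hub) (le_trans hbα hαβ))
        (le_of_lt hc.1), hc.2⟩)
    rw [e1, e2, e3, e4, e5]
    by_cases hIB : x ∈ Ioo β u'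
    · rw [cind_pos hIB]; nlinarith
    · rw [cind_neg hIB]; nlinarith
  · -- inside the window
    rw [cind_pos hIC]
    obtain ⟨hsx, hxt⟩ := hIC
    rcases lt_trichotomy x u with hxu | hxu | hxu
    · -- x < u : here w = 1, and x ∈ [s, b')
      have hw' : w = 1 := H1 hsx hxu
      have e1 : cind (x ∈ Ico s b') = 1 :=
        cind_pos ⟨hsx, lt_of_lt_of_le hxu hub⟩
      have e2 : cind (x ∈ Icc α β) = 0 :=
        cind_neg (fun hc => absurd hc.1 (not_le.2 (lt_of_lt_of_le hxu (le_trans hub hbα))))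
      have e6 : cind (x ∈ Ioo β u') = 0 :=
        cind_neg (fun hc => absurd hc.1 (not_lt.2 (le_of_lt (lt_of_lt_of_le hxu (le_trans (le_trans hub hbα) hαβ)))))
      have e3 : 0 ≤ cind (x ∈ Ioo u b') := cind_nonneg _
      have e4 : 0 ≤ cind (x ∈ Ioo u α) := cind_nonneg _
      have e5 : 0 ≤ cind (x ∈ Ioo β t) := cind_nonneg _
      rw [hw', e1, e2, e6]
      nlinarith
    · -- x = u
      rcases hw with hw' | hw'
      · -- w = 0, so b' = u, nothing to show
        have hbu : b' ≤ u := H2' hxu hw'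
        have hb'u : b' = u := le_antisymm hbu hub
        have e1 : cind (x ∈ Ico s b') = 0 :=
          cind_neg (fun hc => absurd hc.2 (by rw [hb'u, hxu]; exact lt_irrefl u))
        rw [hw', e1]
        by_cases hIB : x ∈ Ioo β u'
        · rw [cind_pos hIB]
          have e3 : 0 ≤ cind (x ∈ Ioo u b') := cind_nonneg _
          nlinarith
        · rw [cind_neg hIB]
          have e3 : 0 ≤ cind (x ∈ Ioo u b') := cind_nonneg _
          nlinarith
      · -- w = 1, so u < b'
        have hub' : u < b' := H2 hxu hw'
        have e1 : cind (x ∈ Ico s b') = 1 :=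
          cind_pos ⟨hsx, by rw [hxu]; exact hub'⟩
        have e2 : cind (x ∈ Icc α β) = 0 :=
          cind_neg (fun hc => absurd hc.1 (not_le.2 (by rw [hxu]; exact lt_of_lt_of_le hub' hbα)))
        have e6 : cind (x ∈ Ioo β u') = 0 :=
          cind_neg (fun hc => absurd hc.1 (not_lt.2 (hxu ▸ le_of_lt (lt_of_lt_of_le hub' (le_trans hbα hαβ)))))
        have e3 : 0 ≤ cind (x ∈ Ioo u b') := cind_nonneg _
        have e4 : 0 ≤ cind (x ∈ Ioo u α) := cind_nonneg _
        have e5 : 0 ≤ cind (x ∈ Ioo β t) := cind_nonneg _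
        rw [hw', e1, e2, e6]
        have hxb : x < b' := by rw [hxu]; exact hub'
        nlinarith
    · -- u < x
      rcases lt_trichotomy x b' with hxb | hxb | hxb
      · -- u < x < b'
        have e1 : cind (x ∈ Ico s b') = 1 := cind_pos ⟨hsx, hxb⟩
        have e2 : cind (x ∈ Icc α β) = 0 :=
          cind_neg (fun hc => absurd hc.1 (not_le.2 (lt_of_lt_of_le hxb hbα)))
        have e6 : cind (x ∈ Ioo β u') = 0 :=
          cind_neg (fun hc => absurd hc.1 (not_lt.2 (le_of_lt (lt_of_lt_of_le hxb (le_trans hbα hαβ)))))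
        have e3 : cind (x ∈ Ioo u b') = 1 := cind_pos ⟨hxu, hxb⟩
        have e4 : 0 ≤ cind (x ∈ Ioo u α) := cind_nonneg _
        have e5 : 0 ≤ cind (x ∈ Ioo β t) := cind_nonneg _
        rw [e1, e2, e6, e3]
        nlinarith
      · -- x = b' : this can only happen with region [b', α) handling
        have e1 : cind (x ∈ Ico s b') = 0 :=
          cind_neg (fun hc => absurd hc.2 (by rw [hxb]; exact lt_irrefl b'))
        rcases le_or_gt α x with hαx | hαx
        · -- x = b' = α (since b' ≤ α ≤ x = b')
          have hxα : x = α := le_antisymm (hxb ▸ hbα) hαx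
          have e2 : cind (x ∈ Icc α β) = 1 := cind_pos ⟨hαx, hxα ▸ hαβ⟩
          have e6 : cind (x ∈ Ioo β u') = 0 :=
            cind_neg (fun hc => absurd hc.1 (not_lt.2 (hxα ▸ hαβ)))
          have e3 : 0 ≤ cind (x ∈ Ioo u b') := cind_nonneg _
          have e4 : 0 ≤ cind (x ∈ Ioo u α) := cind_nonneg _
          have e5 : 0 ≤ cind (x ∈ Ioo β t) := cind_nonneg _
          rw [e1, e2, e6]
          have hu'x : u' - x ≤ δ + τ := by nlinarith
          nlinarith
        · -- b' = x < α
          have e2 : cind (x ∈ Icc α β) = 0 :=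
            cind_neg (fun hc => absurd hc.1 (not_le.2 hαx))
          have e6 : cind (x ∈ Ioo β u') = 0 :=
            cind_neg (fun hc => absurd hc.1 (not_lt.2 (le_of_lt (lt_of_lt_of_le hαx hαβ))))
          have e4 : cind (x ∈ Ioo u α) = 1 := cind_pos ⟨hxu, hαx⟩
          have e3 : 0 ≤ cind (x ∈ Ioo u b') := cind_nonneg _
          have e5 : 0 ≤ cind (x ∈ Ioo β t) := cind_nonneg _
          rw [e1, e2, e6, e4]
          nlinarith
      · -- b' < x
        have e1 : cind (x ∈ Ico s b') = 0 :=
          cind_neg (fun hc => absurd hc.2 (not_lt.2 (le_of_lt hxb)))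
        rcases lt_trichotomy x α with hxα | hxα | hxα
        · -- b' < x < α
          have e2 : cind (x ∈ Icc α β) = 0 :=
            cind_neg (fun hc => absurd hc.1 (not_le.2 hxα))
          have e6 : cind (x ∈ Ioo β u') = 0 :=
            cind_neg (fun hc => absurd hc.1 (not_lt.2 (le_of_lt (lt_of_lt_of_le hxα hαβ))))
          have e4 : cind (x ∈ Ioo u α) = 1 := cind_pos ⟨hxu, hxα⟩
          have e3 : 0 ≤ cind (x ∈ Ioo u b') := cind_nonneg _
          have e5 : 0 ≤ cind (x ∈ Ioo β t) := cind_nonneg _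
          rw [e1, e2, e6, e4]
          nlinarith
        · -- x = α
          have e2 : cind (x ∈ Icc α β) = 1 := cind_pos ⟨le_of_eq hxα.symm, hxα ▸ hαβ⟩
          have e6 : cind (x ∈ Ioo β u') = 0 :=
            cind_neg (fun hc => absurd hc.1 (not_lt.2 (hxα ▸ hαβ)))
          have e3 : 0 ≤ cind (x ∈ Ioo u b') := cind_nonneg _
          have e4 : 0 ≤ cind (x ∈ Ioo u α) := cind_nonneg _
          have e5 : 0 ≤ cind (x ∈ Ioo β t) := cind_nonneg _
          rw [e1, e2, e6]
          have key : u' - x ≤ δ + τ := by nlinarith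
          nlinarith
        · -- α < x
          rcases le_or_gt x β with hxβ | hxβ
          · -- α < x ≤ β
            have e2 : cind (x ∈ Icc α β) = 1 := cind_pos ⟨le_of_lt hxα, hxβ⟩
            have e6 : cind (x ∈ Ioo β u') = 0 :=
              cind_neg (fun hc => absurd hc.1 (not_lt.2 hxβ))
            have e3 : 0 ≤ cind (x ∈ Ioo u b') := cind_nonneg _
            have e4 : 0 ≤ cind (x ∈ Ioo u α) := cind_nonneg _
            have e5 : 0 ≤ cind (x ∈ Ioo β t) := cind_nonneg _
            rw [e1, e2, e6]
            have key : u' - x ≤ δ + τ := by nlinarith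
            nlinarith
          · -- β < x < t
            have e2 : cind (x ∈ Icc α β) = 0 :=
              cind_neg (fun hc => absurd hc.2 (not_le.2 hxβ))
            have e5 : cind (x ∈ Ioo β t) = 1 := cind_pos ⟨hxβ, hxt⟩
            have e3 : 0 ≤ cind (x ∈ Ioo u b') := cind_nonneg _
            have e4 : 0 ≤ cind (x ∈ Ioo u α) := cind_nonneg _
            rw [e1, e2, e5]
            by_cases hIB : x ∈ Ioo β u'
            · rw [cind_pos hIB]; nlinarith
            · rw [cind_neg hIB]; nlinarith

/-! ### window machinery -/

section Window

variable {κ : ℝ → ℝ} {v : ℝ}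

lemma indI_cind (S : Set ℝ) (z : ℝ × ℝ) : indI S z = cind (z.1 ∈ S) := by
  by_cases h : z.1 ∈ S
  · rw [cind_pos h]; unfold indI; rw [Set.indicator_of_mem h]
  · rw [cind_neg h]; unfold indI; rw [Set.indicator_of_notMem h]

lemma wA_cases (κ : ℝ → ℝ) (v : ℝ) (z : ℝ × ℝ) : wA κ v z = 0 ∨ wA κ v z = 1 := by
  rw [wA_eq]; split <;> simp

lemma wA_eq_one_iff {z : ℝ × ℝ} : wA κ v z = 1 ↔ v ≤ κ z.1 := by
  rw [wA_eq]; split <;> simp_all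

lemma meas_sub_const (c : ℝ) : Measurable (fun z : ℝ × ℝ => z.2 - c) :=
  measurable_snd.sub measurable_const

/-- integrability of all the terms we use -/
lemma int_indI_mul (hJ : IsPredDist J) {S : Set ℝ} (hS : MeasurableSet S) {c : ℝ}
    (hc0 : 0 ≤ c) (hc1 : c ≤ 1) :
    Integrable (fun z => indI S z * (z.2 - c)) J := by
  apply integrable_of_bdd hJ.1 (((meas_indI hS).mul (meas_sub_const c)).aestronglyMeasurable)
  filter_upwards [hJ.2] with z hz
  have h1 := indI_nonneg S z
  have h2 := indI_le_one S z
  have h3 : |z.2 - c| ≤ 1 := by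
    rcases hz.2 with h | h <;> rw [h, abs_le] <;> constructor <;> linarith
  calc |indI S z * (z.2 - c)| = |indI S z| * |z.2 - c| := abs_mul _ _
  _ ≤ 1 * 1 := by
      apply mul_le_mul _ h3 (abs_nonneg _) zero_le_one
      rw [abs_of_nonneg h1]; exact h2
  _ = 1 := by norm_num

lemma int_indI (hJ : IsPredDist J) {S : Set ℝ} (hS : MeasurableSet S) :
    Integrable (indI S) J := by
  apply integrable_of_bdd hJ.1 (meas_indI hS).aestronglyMeasurable
    (c := 1) (Eventually.of_forall fun z => ?_)
  rw [abs_of_nonneg (indI_nonneg S z)]; exact indI_le_one S z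

lemma int_wA_indI (hJ : IsPredDist J) (hWm : AEStronglyMeasurable (wA κ v) J)
    {S : Set ℝ} (hS : MeasurableSet S) :
    Integrable (fun z => wA κ v z * indI S z) J := by
  apply integrable_of_bdd hJ.1 (hWm.mul (meas_indI hS).aestronglyMeasurable)
    (c := 1) (Eventually.of_forall fun z => ?_)
  have h1 := indI_nonneg S z; have h2 := indI_le_one S z
  have h3 := wA_nonneg (κ := κ) (v := v) z; have h4 := wA_le_one (κ := κ) (v := v) z
  show |wA κ v z * indI S z| ≤ 1
  rw [abs_of_nonneg (mul_nonneg h3 h1)]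
  nlinarith

lemma int_T2 (hJ : IsPredDist J) (hWm : AEStronglyMeasurable (wA κ v) J)
    {α β u' : ℝ} (hu0 : 0 ≤ u') (hu1 : u' ≤ 1) :
    Integrable (fun z => (wA κ v z * indI (Icc α β) z + indI (Ioo β u') z) * (z.2 - u')) J := by
  apply integrable_of_bdd hJ.1
    (((hWm.mul (meas_indI measurableSet_Icc).aestronglyMeasurable).add
      (meas_indI measurableSet_Ioo).aestronglyMeasurable).mul
      (meas_sub_const u').aestronglyMeasurable)
  filter_upwards [hJ.2] with z hz
  have h1 := indI_nonneg (Icc α β) z; have h2 := indI_le_one (Icc α β) z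
  have h1' := indI_nonneg (Ioo β u') z; have h2' := indI_le_one (Ioo β u') z
  have h3 := wA_nonneg (κ := κ) (v := v) z; have h4 := wA_le_one (κ := κ) (v := v) z
  have h5 : |z.2 - u'| ≤ 1 := by
    rcases hz.2 with h | h <;> rw [h, abs_le] <;> constructor <;> linarith
  have h6 : 0 ≤ wA κ v z * indI (Icc α β) z + indI (Ioo β u') z := by positivity
  have h7 : wA κ v z * indI (Icc α β) z + indI (Ioo β u') z ≤ 2 := by nlinarith
  calc |(wA κ v z * indI (Icc α β) z + indI (Ioo β u') z) * (z.2 - u')|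
      = |wA κ v z * indI (Icc α β) z + indI (Ioo β u') z| * |z.2 - u'| := abs_mul _ _
  _ ≤ 2 * 1 := by
      apply mul_le_mul _ h5 (abs_nonneg _) (by norm_num)
      rw [abs_of_nonneg h6]; exact h7
  _ ≤ 2 := by norm_num

lemma int_wA_indI_mul (hJ : IsPredDist J) (hWm : AEStronglyMeasurable (wA κ v) J)
    {S : Set ℝ} (hS : MeasurableSet S) :
    Integrable (fun z => wA κ v z * indI S z * (z.2 - z.1)) J := by
  apply integrable_of_bdd hJ.1
    (((hWm.mul (meas_indI hS).aestronglyMeasurable)).mul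
      (measurable_snd.sub measurable_fst).aestronglyMeasurable)
  filter_upwards [hJ.2] with z hz
  have h1 := indI_nonneg S z; have h2 := indI_le_one S z
  have h3 := wA_nonneg (κ := κ) (v := v) z; have h4 := wA_le_one (κ := κ) (v := v) z
  have h5 : |z.2 - z.1| ≤ 1 := by
    rcases hz.2 with h | h <;> rw [h, abs_le] <;> constructor <;>
      [linarith [hz.1.1, hz.1.2]; linarith [hz.1.1, hz.1.2]; linarith [hz.1.1, hz.1.2];
       linarith [hz.1.1, hz.1.2]]
  calc |wA κ v z * indI S z * (z.2 - z.1)| = |wA κ v z * indI S z| * |z.2 - z.1| := abs_mul _ _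
  _ ≤ 1 * 1 := by
      apply mul_le_mul _ h5 (abs_nonneg _) zero_le_one
      rw [abs_of_nonneg (mul_nonneg h3 h1)]; nlinarith
  _ = 1 := by norm_num

/-- Core combination for a window in the main (non-degenerate) case. -/
lemma window_core (hJ : IsPredDist J) (hK : ValidClass K) (hκ : κ ∈ K)
    (hWm : AEStronglyMeasurable (wA κ v) J)
    {s t u b' α β u' δ τ : ℝ}
    (hs : 0 ≤ s) (hsu : s ≤ u) (hub : u ≤ b') (hbα : b' ≤ α) (hαβ : α ≤ β)
    (hβu' : β < u') (hu'1 : u' ≤ 1) (hut : u < t) (ht1 : t ≤ 1) (htsδ : t - s ≤ δ)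
    (hαt : α < t) (hβt : β < t) (hu'β : u' ≤ β + τ)
    (hκα : κ α < v) (hκβ : v ≤ κ β)
    (HZ1 : ∀ x : ℝ, s ≤ x → x < u → v ≤ κ x)
    (HU : (v ≤ κ u ∧ u < b') ∨ (κ u < v ∧ b' = u))
    (hs1 : ∫ z, indI (Ioo u b') z ∂J ≤ τ)
    (hs2 : ∫ z, wA κ v z * indI (Ioo u α) z ∂J ≤ τ)
    (hs3 : ∫ z, wA κ v z * indI (Ioo β t) z ∂J ≤ τ)
    (hs4 : ∫ z, indI (Ioo β u') z ∂J ≤ τ) :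
    ∫ z, wA κ v z * indI (Ico s t) z * (z.2 - z.1) ∂J ≤
      CDL K J + 4 * τ + (δ + τ) * ∫ z, indI (Ico s t) z ∂J := by
  haveI := hJ.1
  have hb'1 : b' ≤ 1 := le_trans hbα (le_of_lt (lt_of_lt_of_le hαt ht1))
  have hb'0 : 0 ≤ b' := le_trans (le_trans hs hsu) hub
  have hu'0 : 0 < u' := lt_of_le_of_lt (le_trans hb'0 (le_trans hbα hαβ)) hβu'
  have hα0 : 0 ≤ α := le_trans hb'0 hbα
  -- the seven pieces
  set T1 : ℝ × ℝ → ℝ := fun z => indI (Ico s b') z * (z.2 - b') with hT1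
  set T2 : ℝ × ℝ → ℝ := fun z =>
    (wA κ v z * indI (Icc α β) z + indI (Ioo β u') z) * (z.2 - u') with hT2
  set T3 : ℝ × ℝ → ℝ := fun z => (δ + τ) * indI (Ico s t) z with hT3
  set T4 : ℝ × ℝ → ℝ := fun z => indI (Ioo u b') z with hT4
  set T5 : ℝ × ℝ → ℝ := fun z => wA κ v z * indI (Ioo u α) z with hT5
  set T6 : ℝ × ℝ → ℝ := fun z => indI (Ioo β u') z with hT6
  set T7 : ℝ × ℝ → ℝ := fun z => wA κ v z * indI (Ioo β t) z with hT7
  have hi1 : Integrable T1 J := int_indI_mul hJ measurableSet_Ico hb'0 hb'1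
  have hi2 : Integrable T2 J := int_T2 hJ hWm (le_of_lt hu'0) hu'1
  have hi3 : Integrable T3 J := (int_indI hJ measurableSet_Ico).const_mul _
  have hi4 : Integrable T4 J := int_indI hJ measurableSet_Ioo
  have hi5 : Integrable T5 J := int_wA_indI hJ hWm measurableSet_Ioo
  have hi6 : Integrable T6 J := int_indI hJ measurableSet_Ioo
  have hi7 : Integrable T7 J := int_wA_indI hJ hWm measurableSet_Ioo
  have hmain : ∫ z, wA κ v z * indI (Ico s t) z * (z.2 - z.1) ∂J ≤
      ∫ z, (T1 z + T2 z + T3 z + T4 z + T5 z + T6 z + T7 z) ∂J := by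
    apply integral_mono_ae (int_wA_indI_mul hJ hWm measurableSet_Ico)
    · exact (((((hi1.add hi2).add hi3).add hi4).add hi5).add hi6).add hi7
    filter_upwards [hJ.2] with z hz
    have hptw := window_pointwise z.1 z.2 (wA κ v z) s t u b' α β u' δ τ
      hz.1.1 (by rcases hz.2 with h | h <;> rw [h] <;> norm_num)
      (by rcases hz.2 with h | h <;> rw [h] <;> norm_num)
      (wA_cases κ v z) hs hsu hub hbα hαβ hβu' hu'1 hut htsδ hαt hβt hu'β
      (fun h1 h2 => wA_eq_one_iff.2 (HZ1 z.1 h1 h2))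
      (fun he hw => by
        rcases HU with ⟨_, hub'⟩ | ⟨hku, _⟩
        · exact hub'
        · exfalso
          rw [wA_eq_one_iff, he] at hw
          linarith)
      (fun he hw => by
        rcases HU with ⟨hku, _⟩ | ⟨_, hb'u⟩
        · exfalso
          rw [wA_eq, he, if_pos hku] at hw
          norm_num at hw
        · exact le_of_eq hb'u)
    simp only [hT1, hT2, hT3, hT4, hT5, hT6, hT7, indI_cind]
    exact hptw
  have hsplit : ∫ z, (T1 z + T2 z + T3 z + T4 z + T5 z + T6 z + T7 z) ∂J =
      (∫ z, T1 z ∂J) + (∫ z, T2 z ∂J) + (∫ z, T3 z ∂J) + (∫ z, T4 z ∂J) +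
        (∫ z, T5 z ∂J) + (∫ z, T6 z ∂J) + (∫ z, T7 z ∂J) := by
    have h12 : Integrable (fun z => T1 z + T2 z) J := hi1.add hi2
    have h13 : Integrable (fun z => T1 z + T2 z + T3 z) J := h12.add hi3
    have h14 : Integrable (fun z => T1 z + T2 z + T3 z + T4 z) J := h13.add hi4
    have h15 : Integrable (fun z => T1 z + T2 z + T3 z + T4 z + T5 z) J := h14.add hi5
    have h16 : Integrable (fun z => T1 z + T2 z + T3 z + T4 z + T5 z + T6 z) J := h15.add hi6
    rw [integral_add h16 hi7, integral_add h15 hi6, integral_add h14 hi5,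
      integral_add h13 hi4, integral_add h12 hi3, integral_add hi1 hi2]
  -- bounds on each piece
  have hb1 : ∫ z, T1 z ∂J ≤ CDL K J / 2 := by
    rcases eq_or_lt_of_le hb'0 with h0 | h0
    · have hs0 : s = 0 := le_antisymm (by rw [h0]; exact le_trans hsu hub) hs
      have hempty : Ico s b' = (∅ : Set ℝ) := by rw [hs0, ← h0]; exact Ico_self 0
      have hz : ∀ z : ℝ × ℝ, T1 z = 0 := by
        intro z
        simp [hT1, indI, hempty]
      rw [integral_congr_ae (Eventually.of_forall hz), integral_zero]
      linarith [CDL_nonneg hJ hK]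
    · exact block_IdN hJ hK (le_trans hsu hub) hb'1 h0
  have hb2 : ∫ z, T2 z ∂J ≤ CDL K J / 2 := block_CL hJ hK hκ hα0 hαβ hβu' hu'1 hκα hκβ
  have hb3 : ∫ z, T3 z ∂J = (δ + τ) * ∫ z, indI (Ico s t) z ∂J := integral_const_mul _ _
  linarith [hmain, hsplit, hb1, hb2, hb3, hs1, hs2, hs3, hs4]

end Window
section Window2

variable {κ : ℝ → ℝ} {v : ℝ} {K : Set (ℝ → ℝ)} {J : Measure (ℝ × ℝ)}

/-- Pointwise inequality for a window with no active weight in its upper part. -/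
lemma window_pointwise_empty
    (x y w s t u b' α δ τ : ℝ)
    (hx : 0 ≤ x) (hy0 : 0 ≤ y) (hy1 : y ≤ 1) (hw : w = 0 ∨ w = 1)
    (hs : 0 ≤ s) (hsu : s ≤ u) (hub : u ≤ b') (hbα : b' ≤ α)
    (hut : u < t) (ht1 : t ≤ 1) (htsδ : t - s ≤ δ) (hαt : α < t) (hτ : 0 ≤ τ)
    (H1 : s ≤ x → x < u → w = 1)
    (H2 : x = u → w = 1 → u < b')
    (H2' : x = u → w = 0 → b' ≤ u)
    (H3 : α ≤ x → x < t → w = 0) :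
    w * cind (x ∈ Ico s t) * (y - x) ≤
      cind (x ∈ Ico s b') * (y - b') + (δ + τ) * cind (x ∈ Ico s t)
      + cind (x ∈ Ioo u b') + w * cind (x ∈ Ioo u α) := by
  have hw0 : 0 ≤ w := by rcases hw with h | h <;> simp [h]
  have hw1 : w ≤ 1 := by rcases hw with h | h <;> simp [h]
  have hb't : b' < t := lt_of_le_of_lt hbα hαt
  have hb'1 : b' ≤ 1 := le_of_lt (lt_of_lt_of_le hb't ht1)
  have e3 : 0 ≤ cind (x ∈ Ioo u b') := cind_nonneg _
  have e4 : 0 ≤ cind (x ∈ Ioo u α) := cind_nonneg _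
  by_cases hIC : x ∈ Ico s t
  swap
  · rw [cind_neg hIC]
    have e1 : cind (x ∈ Ico s b') = 0 :=
      cind_neg (fun hc => hIC ⟨hc.1, lt_of_lt_of_le hc.2 (le_of_lt hb't)⟩)
    have e3' : cind (x ∈ Ioo u b') = 0 :=
      cind_neg (fun hc => hIC ⟨le_trans hsu (le_of_lt hc.1), lt_trans hc.2 hb't⟩)
    have e4' : cind (x ∈ Ioo u α) = 0 :=
      cind_neg (fun hc => hIC ⟨le_trans hsu (le_of_lt hc.1), lt_trans hc.2 hαt⟩)
    rw [e1, e3', e4']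
    nlinarith
  · rw [cind_pos hIC]
    obtain ⟨hsx, hxt⟩ := hIC
    rcases lt_trichotomy x u with hxu | hxu | hxu
    · have hw' : w = 1 := H1 hsx hxu
      have e1 : cind (x ∈ Ico s b') = 1 := cind_pos ⟨hsx, lt_of_lt_of_le hxu hub⟩
      rw [hw', e1]
      nlinarith
    · rcases hw with hw' | hw'
      · have hb'u : b' = u := le_antisymm (H2' hxu hw') hub
        have e1 : cind (x ∈ Ico s b') = 0 :=
          cind_neg (fun hc => absurd hc.2 (by rw [hb'u, hxu]; exact lt_irrefl u))
        rw [hw', e1]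
        nlinarith
      · have hub' : u < b' := H2 hxu hw'
        have e1 : cind (x ∈ Ico s b') = 1 := cind_pos ⟨hsx, by rw [hxu]; exact hub'⟩
        rw [hw', e1]
        have : b' < t := hb't
        nlinarith
    · rcases lt_trichotomy x b' with hxb | hxb | hxb
      · have e1 : cind (x ∈ Ico s b') = 1 := cind_pos ⟨hsx, hxb⟩
        have e3' : cind (x ∈ Ioo u b') = 1 := cind_pos ⟨hxu, hxb⟩
        rw [e1, e3']
        nlinarith
      · have e1 : cind (x ∈ Ico s b') = 0 :=
          cind_neg (fun hc => absurd hc.2 (not_lt.2 (le_of_eq hxb.symm)))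
        rcases lt_or_ge x α with hxα | hxα
        · have e4' : cind (x ∈ Ioo u α) = 1 := cind_pos ⟨hxu, hxα⟩
          rw [e1, e4']
          nlinarith
        · have hw' : w = 0 := H3 hxα hxt
          rw [e1, hw']
          nlinarith
      · have e1 : cind (x ∈ Ico s b') = 0 :=
          cind_neg (fun hc => absurd hc.2 (not_lt.2 (le_of_lt hxb)))
        rcases lt_or_ge x α with hxα | hxα
        · have e4' : cind (x ∈ Ioo u α) = 1 := cind_pos ⟨hxu, hxα⟩
          rw [e1, e4']
          nlinarith
        · have hw' : w = 0 := H3 hxα hxt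
          rw [e1, hw']
          nlinarith

/-- Window bound when the window contains no point with `κ x < v`. -/
lemma window_simple (hJ : IsPredDist J) (hK : ValidClass K)
    (hWm : AEStronglyMeasurable (wA κ v) J)
    {s t δ τ : ℝ} (hs : 0 ≤ s) (hst : s < t) (ht1 : t ≤ 1) (htsδ : t - s ≤ δ) (hτ : 0 ≤ τ)
    (HZ : ∀ x : ℝ, s ≤ x → x < t → v ≤ κ x) :
    ∫ z, wA κ v z * indI (Ico s t) z * (z.2 - z.1) ∂J ≤
      CDL K J + 4 * τ + (δ + τ) * ∫ z, indI (Ico s t) z ∂J := by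
  haveI := hJ.1
  have ht0 : 0 < t := lt_of_le_of_lt hs hst
  have hi1 : Integrable (fun z => indI (Ico s t) z * (z.2 - t)) J :=
    int_indI_mul hJ measurableSet_Ico (le_of_lt ht0) ht1
  have hi3 : Integrable (fun z => (δ + τ) * indI (Ico s t) z) J :=
    (int_indI hJ measurableSet_Ico).const_mul _
  have hi13 : Integrable (fun z => indI (Ico s t) z * (z.2 - t) + (δ + τ) * indI (Ico s t) z) J :=
    hi1.add hi3
  have hmain : ∫ z, wA κ v z * indI (Ico s t) z * (z.2 - z.1) ∂J ≤
      ∫ z, (indI (Ico s t) z * (z.2 - t) + (δ + τ) * indI (Ico s t) z) ∂J := by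
    apply integral_mono_ae (int_wA_indI_mul hJ hWm measurableSet_Ico) hi13
    filter_upwards [hJ.2] with z hz
    by_cases hm : z.1 ∈ Ico s t
    · have hw : wA κ v z = 1 := wA_eq_one_iff.2 (HZ z.1 hm.1 hm.2)
      have hI : indI (Ico s t) z = 1 := by rw [indI_cind, cind_pos hm]
      rw [hw, hI]
      have h1 : t - z.1 ≤ δ := by
        have := hm.1
        linarith
      have : 0 ≤ τ := hτ
      nlinarith
    · have hI : indI (Ico s t) z = 0 := by rw [indI_cind, cind_neg hm]
      rw [hI]
      have := wA_nonneg (κ := κ) (v := v) z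
      nlinarith
  have hsplit : ∫ z, (indI (Ico s t) z * (z.2 - t) + (δ + τ) * indI (Ico s t) z) ∂J =
      (∫ z, indI (Ico s t) z * (z.2 - t) ∂J) + (δ + τ) * ∫ z, indI (Ico s t) z ∂J := by
    rw [integral_add hi1 hi3, integral_const_mul]
  have hb1 : ∫ z, indI (Ico s t) z * (z.2 - t) ∂J ≤ CDL K J / 2 :=
    block_IdN hJ hK (le_of_lt hst) ht1 ht0
  have hD := CDL_nonneg hJ hK
  linarith [hmain, hsplit, hb1]

/-- Window bound in the degenerate case where the weight vanishes above `α`. -/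
lemma window_core_empty (hJ : IsPredDist J) (hK : ValidClass K)
    (hWm : AEStronglyMeasurable (wA κ v) J)
    {s t u b' α δ τ : ℝ}
    (hs : 0 ≤ s) (hsu : s ≤ u) (hub : u ≤ b') (hbα : b' ≤ α)
    (hut : u < t) (ht1 : t ≤ 1) (htsδ : t - s ≤ δ) (hαt : α < t) (hτ : 0 < τ)
    (HZ1 : ∀ x : ℝ, s ≤ x → x < u → v ≤ κ x)
    (HU : (v ≤ κ u ∧ u < b') ∨ (κ u < v ∧ b' = u))
    (H3 : ∀ x : ℝ, α ≤ x → x < t → κ x < v)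
    (hs1 : ∫ z, indI (Ioo u b') z ∂J ≤ τ)
    (hs2 : ∫ z, wA κ v z * indI (Ioo u α) z ∂J ≤ τ) :
    ∫ z, wA κ v z * indI (Ico s t) z * (z.2 - z.1) ∂J ≤
      CDL K J + 4 * τ + (δ + τ) * ∫ z, indI (Ico s t) z ∂J := by
  haveI := hJ.1
  have hb'1 : b' ≤ 1 := le_trans hbα (le_of_lt (lt_of_lt_of_le hαt ht1))
  have hb'0 : 0 ≤ b' := le_trans (le_trans hs hsu) hub
  set T1 : ℝ × ℝ → ℝ := fun z => indI (Ico s b') z * (z.2 - b') with hT1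
  set T3 : ℝ × ℝ → ℝ := fun z => (δ + τ) * indI (Ico s t) z with hT3
  set T4 : ℝ × ℝ → ℝ := fun z => indI (Ioo u b') z with hT4
  set T5 : ℝ × ℝ → ℝ := fun z => wA κ v z * indI (Ioo u α) z with hT5
  have hi1 : Integrable T1 J := int_indI_mul hJ measurableSet_Ico hb'0 hb'1
  have hi3 : Integrable T3 J := (int_indI hJ measurableSet_Ico).const_mul _
  have hi4 : Integrable T4 J := int_indI hJ measurableSet_Ioo
  have hi5 : Integrable T5 J := int_wA_indI hJ hWm measurableSet_Ioo
  have hmain : ∫ z, wA κ v z * indI (Ico s t) z * (z.2 - z.1) ∂J ≤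
      ∫ z, (T1 z + T3 z + T4 z + T5 z) ∂J := by
    have hiS : Integrable (fun z => T1 z + T3 z + T4 z + T5 z) J :=
      ((hi1.add hi3).add hi4).add hi5
    apply integral_mono_ae (int_wA_indI_mul hJ hWm measurableSet_Ico) hiS
    filter_upwards [hJ.2] with z hz
    have hptw := window_pointwise_empty z.1 z.2 (wA κ v z) s t u b' α δ τ
      hz.1.1 (by rcases hz.2 with h | h <;> rw [h] <;> norm_num)
      (by rcases hz.2 with h | h <;> rw [h] <;> norm_num)
      (wA_cases κ v z) hs hsu hub hbα hut ht1 htsδ hαt (le_of_lt hτ)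
      (fun h1 h2 => wA_eq_one_iff.2 (HZ1 z.1 h1 h2))
      (fun he hw => by
        rcases HU with ⟨_, hub'⟩ | ⟨hku, _⟩
        · exact hub'
        · exfalso
          rw [wA_eq_one_iff, he] at hw
          linarith)
      (fun he hw => by
        rcases HU with ⟨hku, _⟩ | ⟨_, hb'u⟩
        · exfalso
          rw [wA_eq, he, if_pos hku] at hw
          norm_num at hw
        · exact le_of_eq hb'u)
      (fun h1 h2 => by
        rw [wA_eq, if_neg (not_le.2 (H3 z.1 h1 h2))])
    simp only [hT1, hT3, hT4, hT5, indI_cind]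
    exact hptw
  have h13 : Integrable (fun z => T1 z + T3 z) J := hi1.add hi3
  have h14 : Integrable (fun z => T1 z + T3 z + T4 z) J := h13.add hi4
  have hsplit : ∫ z, (T1 z + T3 z + T4 z + T5 z) ∂J =
      (∫ z, T1 z ∂J) + (∫ z, T3 z ∂J) + (∫ z, T4 z ∂J) + (∫ z, T5 z ∂J) := by
    rw [integral_add h14 hi5, integral_add h13 hi4, integral_add hi1 hi3]
  have hb1 : ∫ z, T1 z ∂J ≤ CDL K J / 2 := by
    rcases eq_or_lt_of_le hb'0 with h0 | h0
    · have hs0 : s = 0 := le_antisymm (by rw [h0]; exact le_trans hsu hub) hs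
      have hempty : Ico s b' = (∅ : Set ℝ) := by rw [hs0, ← h0]; exact Ico_self 0
      have hz : ∀ z : ℝ × ℝ, T1 z = 0 := by
        intro z
        simp [hT1, indI, hempty]
      rw [integral_congr_ae (Eventually.of_forall hz), integral_zero]
      linarith [CDL_nonneg hJ hK]
    · exact block_IdN hJ hK (le_trans hsu hub) hb'1 h0
  have hb3 : ∫ z, T3 z ∂J = (δ + τ) * ∫ z, indI (Ico s t) z ∂J := integral_const_mul _ _
  have hD := CDL_nonneg hJ hK
  linarith [hmain, hsplit, hb1, hb3, hs1, hs2]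

/-- Monotonicity of weighted indicator integrals. -/
lemma int_wA_indI_mono (hJ : IsPredDist J) (hWm : AEStronglyMeasurable (wA κ v) J)
    {S S' : Set ℝ} (hS : MeasurableSet S) (hS' : MeasurableSet S')
    (h : ∀ x, x ∈ S → v ≤ κ x → x ∈ S') :
    ∫ z, wA κ v z * indI S z ∂J ≤ ∫ z, wA κ v z * indI S' z ∂J := by
  apply integral_mono_ae (int_wA_indI hJ hWm hS) (int_wA_indI hJ hWm hS')
  apply Eventually.of_forall
  intro z
  show wA κ v z * indI S z ≤ wA κ v z * indI S' z
  by_cases hm : z.1 ∈ S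
  · by_cases hw : v ≤ κ z.1
    · have h1 : wA κ v z = 1 := wA_eq_one_iff.2 hw
      have h2 : indI S z = 1 := by rw [indI_cind, cind_pos hm]
      have h3 : indI S' z = 1 := by rw [indI_cind, cind_pos (h z.1 hm hw)]
      rw [h1, h2, h3]
    · have h1 : wA κ v z = 0 := by rw [wA_eq, if_neg hw]
      rw [h1, zero_mul, zero_mul]
  · have h2 : indI S z = 0 := by rw [indI_cind, cind_neg hm]
    rw [h2, mul_zero]
    exact mul_nonneg (wA_nonneg z) (indI_nonneg _ z)

end Window2
section Dispatcher

variable {κ : ℝ → ℝ} {v : ℝ} {K : Set (ℝ → ℝ)} {J : Measure (ℝ × ℝ)}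

/-- The per-window bound. -/
lemma window_bound (hJ : IsPredDist J) (hK : ValidClass K) (hκ : κ ∈ K)
    (hWm : AEStronglyMeasurable (wA κ v) J)
    {s t δ τ : ℝ} (hs : 0 ≤ s) (hst : s < t) (ht1 : t ≤ 1) (htsδ : t - s ≤ δ) (hτ : 0 < τ) :
    ∫ z, wA κ v z * indI (Ico s t) z * (z.2 - z.1) ∂J ≤
      CDL K J + 4 * τ + (δ + τ) * ∫ z, indI (Ico s t) z ∂J := by
  by_cases hZ : ∃ x, x ∈ Ico s t ∧ κ x < v
  swap
  · -- no zero point in the window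
    push_neg at hZ
    exact window_simple hJ hK hWm hs hst ht1 htsδ (le_of_lt hτ)
      (fun x h1 h2 => hZ x ⟨h1, h2⟩)
  obtain ⟨x₀, hx₀I, hx₀κ⟩ := hZ
  set Zw : Set ℝ := {x : ℝ | x ∈ Ico s t ∧ κ x < v} with hZw
  have hZne : Zw.Nonempty := ⟨x₀, hx₀I, hx₀κ⟩
  have hZbdd : BddBelow Zw := ⟨s, fun x hx => hx.1.1⟩
  set u := sInf Zw with hu
  have hsu : s ≤ u := le_csInf hZne (fun x hx => hx.1.1)
  have hut : u < t := lt_of_le_of_lt (csInf_le hZbdd ⟨hx₀I, hx₀κ⟩) hx₀I.2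
  have HZ1 : ∀ x : ℝ, s ≤ x → x < u → v ≤ κ x := by
    intro x h1 h2
    by_contra hc
    push_neg at hc
    have hxZ : x ∈ Zw := ⟨⟨h1, lt_trans h2 hut⟩, hc⟩
    exact absurd (csInf_le hZbdd hxZ) (not_le.2 h2)
  -- first selection: α and b'
  have hsel1 : ∃ α b' : ℝ, (α ∈ Zw) ∧ u ≤ b' ∧ b' ≤ α ∧
      ((v ≤ κ u ∧ u < b') ∨ (κ u < v ∧ b' = u)) ∧
      (∫ z, indI (Ioo u b') z ∂J ≤ τ) ∧
      (∫ z, wA κ v z * indI (Ioo u α) z ∂J ≤ τ) := by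
    by_cases huZ : u ∈ Zw
    · refine ⟨u, u, huZ, le_refl u, le_refl u, Or.inr ⟨huZ.2, rfl⟩, ?_, ?_⟩
      · have hz : ∀ z : ℝ × ℝ, indI (Ioo u u) z = 0 := by
          intro z
          simp [indI, Set.Ioo_self]
        rw [integral_congr_ae (Eventually.of_forall hz), integral_zero]
        exact le_of_lt hτ
      · have hz : ∀ z : ℝ × ℝ, wA κ v z * indI (Ioo u u) z = 0 := by
          intro z
          simp [indI, Set.Ioo_self]
        rw [integral_congr_ae (Eventually.of_forall hz), integral_zero]
        exact le_of_lt hτ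
    · have huκ : v ≤ κ u := by
        by_contra hc
        exact huZ ⟨⟨hsu, hut⟩, not_le.1 hc⟩
      obtain ⟨c, hc1, hc2, hc3⟩ := sel_right hJ hWm wA_nonneg wA_le_one hut hτ
      obtain ⟨α, hαZ, hαc⟩ := (csInf_lt_iff hZbdd hZne).1 hc1
      have huα : u < α :=
        lt_of_le_of_ne (csInf_le hZbdd hαZ) (fun he => huZ (by rw [he]; exact hαZ))
      obtain ⟨b', hb'1, hb'2, hb'3⟩ :=
        sel_right hJ (aestronglyMeasurable_const (b := (1:ℝ)))
          (fun _ => zero_le_one) (fun _ => le_refl 1) huα hτ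
      refine ⟨α, b', hαZ, le_of_lt hb'1, hb'2, Or.inl ⟨huκ, hb'1⟩, ?_, ?_⟩
      · calc ∫ z, indI (Ioo u b') z ∂J = ∫ z, (1:ℝ) * indI (Ioo u b') z ∂J := by
              simp only [one_mul]
        _ ≤ τ := hb'3
      · calc ∫ z, wA κ v z * indI (Ioo u α) z ∂J
            ≤ ∫ z, wA κ v z * indI (Ioo u c) z ∂J := by
              apply int_wA_indI_mono hJ hWm measurableSet_Ioo measurableSet_Ioo
              intro x hx _
              exact ⟨hx.1, lt_of_lt_of_le hx.2 (le_of_lt hαc)⟩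
        _ ≤ τ := hc3
  obtain ⟨α, b', hαZ, hub, hbα, HU, hs1, hs2⟩ := hsel1
  have hκα : κ α < v := hαZ.2
  have hαt : α < t := hαZ.1.2
  have huα : u ≤ α := csInf_le hZbdd hαZ
  -- second phase: the active upper part
  by_cases hA : ∃ x, v ≤ κ x ∧ α < x ∧ x < t
  swap
  · -- degenerate : no active weight above α
    push_neg at hA
    apply window_core_empty hJ hK hWm hs hsu hub hbα hut ht1 htsδ hαt hτ HZ1 HU _ hs1 hs2
    intro x h1 h2
    rcases eq_or_lt_of_le h1 with he | hlt
    · rw [← he]; exact hκα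
    · by_contra hc
      push_neg at hc
      exact absurd (hA x hc hlt) (not_le.2 h2)
  · obtain ⟨x₁, hx₁⟩ := hA
    set Aset : Set ℝ := {x : ℝ | v ≤ κ x ∧ α < x ∧ x < t} with hAset
    have hAne : Aset.Nonempty := ⟨x₁, hx₁⟩
    have hAbdd : BddAbove Aset := ⟨t, fun x hx => le_of_lt hx.2.2⟩
    set σ := sSup Aset with hσ
    have hσα : α < σ := lt_of_lt_of_le hx₁.2.1 (le_csSup hAbdd hx₁)
    have hσt : σ ≤ t := csSup_le hAne (fun x hx => le_of_lt hx.2.2)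
    have hAup : ∀ x : ℝ, v ≤ κ x → σ < x → x < t → False := by
      intro x h1 h2 h3
      exact absurd (le_csSup hAbdd ⟨h1, lt_trans hσα h2, h3⟩) (not_le.2 h2)
    have hsel2 : ∃ β : ℝ, β ∈ Aset ∧ (∫ z, wA κ v z * indI (Ioo β t) z ∂J ≤ τ) := by
      by_cases hσA : σ ∈ Aset
      · refine ⟨σ, hσA, ?_⟩
        have hz : ∀ z : ℝ × ℝ, wA κ v z * indI (Ioo σ t) z = 0 := by
          intro z
          by_cases hm : z.1 ∈ Ioo σ t
          · have : wA κ v z = 0 := by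
              rw [wA_eq, if_neg]
              intro hc
              exact hAup z.1 hc hm.1 hm.2
            rw [this, zero_mul]
          · have : indI (Ioo σ t) z = 0 := by rw [indI_cind, cind_neg hm]
            rw [this, mul_zero]
        rw [integral_congr_ae (Eventually.of_forall hz), integral_zero]
        exact le_of_lt hτ
      · obtain ⟨c, hcα, hcσ, hc3⟩ := sel_left hJ hWm wA_nonneg wA_le_one hσα hτ
        obtain ⟨β, hβA, hcβ⟩ := exists_lt_of_lt_csSup hAne hcσ
        refine ⟨β, hβA, ?_⟩
        calc ∫ z, wA κ v z * indI (Ioo β t) z ∂J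
            ≤ ∫ z, wA κ v z * indI (Ioo c σ) z ∂J := by
              apply int_wA_indI_mono hJ hWm measurableSet_Ioo measurableSet_Ioo
              intro x hx hvx
              refine ⟨lt_trans hcβ hx.1, ?_⟩
              rcases lt_trichotomy x σ with h | h | h
              · exact h
              · exfalso
                apply hσA
                rw [← h] at *
                exact ⟨hvx, lt_trans (lt_of_le_of_lt hcα hcβ) hx.1, hx.2⟩
              · exact absurd (hAup x hvx h hx.2) not_false
        _ ≤ τ := hc3
    obtain ⟨β, hβA, hs3⟩ := hsel2
    have hβ1 : β < 1 := lt_of_lt_of_le hβA.2.2 ht1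
    have hβm : β < min 1 (β + τ) := lt_min hβ1 (by linarith)
    obtain ⟨u', hu'1', hu'2, hu'3⟩ :=
      sel_right hJ (aestronglyMeasurable_const (b := (1:ℝ)))
        (fun _ => zero_le_one) (fun _ => le_refl 1) hβm hτ
    have hs4 : ∫ z, indI (Ioo β u') z ∂J ≤ τ := by
      calc ∫ z, indI (Ioo β u') z ∂J = ∫ z, (1:ℝ) * indI (Ioo β u') z ∂J := by
            simp only [one_mul]
      _ ≤ τ := hu'3
    exact window_core hJ hK hκ hWm hs hsu hub hbα (le_of_lt hβA.2.1) hu'1'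
      (le_trans hu'2 (min_le_left _ _)) hut ht1 htsδ hαt hβA.2.2
      (le_trans hu'2 (min_le_right _ _)) hκα hβA.1 HZ1 HU hs1 hs2 hs3 hs4

end Dispatcher
section Final

variable {κ : ℝ → ℝ} {v : ℝ} {K : Set (ℝ → ℝ)} {J : Measure (ℝ × ℝ)}

/-- grid points -/
def gridt (δ : ℝ) (j : ℕ) : ℝ := min ((j:ℝ) * δ) 1

lemma gridt_nonneg {δ : ℝ} (hδ : 0 < δ) (j : ℕ) : 0 ≤ gridt δ j :=
  le_min (by positivity) zero_le_one

lemma gridt_le_one (δ : ℝ) (j : ℕ) : gridt δ j ≤ 1 := min_le_right _ _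

lemma gridt_mono {δ : ℝ} (hδ : 0 < δ) : Monotone (gridt δ) := by
  intro i j hij
  apply min_le_min _ (le_refl 1)
  apply mul_le_mul_of_nonneg_right _ (le_of_lt hδ)
  exact_mod_cast hij

lemma gridt_succ_sub {δ : ℝ} (hδ : 0 < δ) (j : ℕ) : gridt δ (j+1) - gridt δ j ≤ δ := by
  unfold gridt
  rcases le_total ((j:ℝ) * δ) 1 with h | h
  · rw [min_eq_left h]
    have : min ((↑(j+1):ℝ) * δ) 1 ≤ (↑(j+1):ℝ) * δ := min_le_left _ _
    push_cast at *
    linarith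
  · rw [min_eq_right h]
    have : min ((↑(j+1):ℝ) * δ) 1 ≤ 1 := min_le_right _ _
    linarith

lemma gridt_lt_succ {δ : ℝ} (hδ : 0 < δ) {j : ℕ} (hj1 : (j:ℝ) * δ < 1) :
    gridt δ j < gridt δ (j+1) := by
  unfold gridt
  rw [min_eq_left (le_of_lt hj1)]
  apply lt_min _ hj1
  push_cast
  nlinarith

lemma grid_sum {δ : ℝ} (hδ0 : 0 < δ) {m : ℕ} (hm1 : 1 ≤ (m:ℝ) * δ) (x : ℝ) :
    (∑ j ∈ Finset.range m, cind (x ∈ Ico (gridt δ j) (gridt δ (j+1))))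
      = cind (x ∈ Ico (0:ℝ) 1) := by
  by_cases hx : x ∈ Ico (0:ℝ) 1
  · rw [cind_pos hx]
    obtain ⟨hx0, hx1⟩ := hx
    set j₀ := ⌊x / δ⌋₊ with hj₀
    have hxδ : 0 ≤ x / δ := by positivity
    have hfl : (j₀:ℝ) ≤ x / δ := Nat.floor_le hxδ
    have hfl2 : x / δ < (j₀:ℝ) + 1 := Nat.lt_floor_add_one _
    have hj₀δ : (j₀:ℝ) * δ ≤ x := by
      rw [← le_div_iff₀ hδ0] at *
      exact hfl
    have hj₀δ2 : x < ((j₀:ℝ) + 1) * δ := by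
      rw [← div_lt_iff₀ hδ0] at *
      exact hfl2
    have hj₀m : j₀ < m := by
      by_contra hc
      push_neg at hc
      have : (m:ℝ) ≤ (j₀:ℝ) := by exact_mod_cast hc
      have h1 : (m:ℝ) * δ ≤ (j₀:ℝ) * δ := by
        apply mul_le_mul_of_nonneg_right this (le_of_lt hδ0)
      linarith
    rw [Finset.sum_eq_single_of_mem j₀ (Finset.mem_range.2 hj₀m)]
    · apply cind_pos
      constructor
      · exact le_trans (min_le_left _ _) hj₀δ
      · apply lt_min _ hx1
        push_cast
        exact hj₀δ2
    · intro j _ hjj₀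
      apply cind_neg
      rcases lt_or_gt_of_ne hjj₀ with h | h
      · intro hc
        have hle : gridt δ (j+1) ≤ gridt δ j₀ := gridt_mono hδ0 (by omega)
        have : gridt δ j₀ ≤ x := le_trans (min_le_left _ _) hj₀δ
        exact absurd hc.2 (not_lt.2 (le_trans hle this))
      · intro hc
        have hle : gridt δ (j₀+1) ≤ gridt δ j := gridt_mono hδ0 (by omega)
        have hxlt : x < gridt δ (j₀+1) := by
          apply lt_min _ hx1
          push_cast
          exact hj₀δ2
        exact absurd hc.1 (not_le.2 (lt_of_lt_of_le hxlt hle))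
  · rw [cind_neg hx]
    apply Finset.sum_eq_zero
    intro j _
    apply cind_neg
    intro hc
    apply hx
    constructor
    · exact le_trans (gridt_nonneg hδ0 j) hc.1
    · exact lt_of_lt_of_le hc.2 (gridt_le_one δ (j+1))

/-- Key estimate: for every grid width δ -/
lemma key_estimate (hJ : IsPredDist J) (hK : ValidClass K) (hκ : κ ∈ K)
    (hWm : AEStronglyMeasurable (wA κ v) J)
    (hInt : Integrable (fun z => wA κ v z * (z.2 - z.1)) J)
    {δ : ℝ} (hδ0 : 0 < δ) (hδ1 : δ ≤ 1) :
    ∫ z, wA κ v z * (z.2 - z.1) ∂J ≤ (2 / δ) * CDL K J + δ := by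
  haveI := hJ.1
  have hD := CDL_nonneg hJ hK
  apply le_of_forall_pos_le_add
  intro ε hε
  -- choose τ
  set m : ℕ := ⌈1 / δ⌉₊ with hm
  have h1δ : 1 ≤ 1 / δ := by
    rw [le_div_iff₀ hδ0]; linarith
  have hm1 : 1 ≤ (m:ℝ) * δ := by
    have := Nat.le_ceil (1 / δ)
    calc (1:ℝ) = (1/δ) * δ := by field_simp
    _ ≤ (m:ℝ) * δ := by
        apply mul_le_mul_of_nonneg_right _ (le_of_lt hδ0)
        exact this
  have hm2 : (m:ℝ) ≤ 2 / δ := by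
    have h2 := Nat.ceil_lt_add_one (le_trans zero_le_one h1δ)
    have : (m:ℝ) < 1/δ + 1 := h2
    calc (m:ℝ) ≤ 1/δ + 1/δ := by linarith
    _ = 2 / δ := by ring
  have hmδ : (m:ℝ) * δ ≤ 1 + δ := by
    have h2 : (m:ℝ) < 1/δ + 1 := Nat.ceil_lt_add_one (le_trans zero_le_one h1δ)
    have := mul_le_mul_of_nonneg_right (le_of_lt h2) (le_of_lt hδ0)
    calc (m:ℝ) * δ ≤ (1/δ + 1) * δ := this
    _ = 1 + δ := by field_simp
  have hm0 : 1 ≤ m := by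
    rw [Nat.one_le_iff_ne_zero]
    intro hc
    rw [hc] at hm1
    norm_num at hm1
  set τ : ℝ := ε / (2 / δ * 4 + 1) with hτdef
  have hden : 0 < 2 / δ * 4 + 1 := by positivity
  have hτ : 0 < τ := div_pos hε hden
  have hτval : 2 / δ * 4 * τ + τ = ε := by
    have h : 2 / δ * 4 * τ + τ = (2 / δ * 4 + 1) * τ := by ring
    rw [h, hτdef, mul_div_cancel₀ _ (ne_of_gt hden)]
  -- window functions
  set g : ℕ → (ℝ × ℝ) → ℝ :=
    fun j z => wA κ v z * indI (Ico (gridt δ j) (gridt δ (j+1))) z * (z.2 - z.1) with hg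
  set e : (ℝ × ℝ) → ℝ := fun z => wA κ v z * indI (Ici 1) z * (z.2 - z.1) with he
  have hig : ∀ j, Integrable (g j) J := fun j => int_wA_indI_mul hJ hWm measurableSet_Ico
  have hie : Integrable e J := int_wA_indI_mul hJ hWm measurableSet_Ici
  have hsplit : ∫ z, wA κ v z * (z.2 - z.1) ∂J =
      (∑ j ∈ Finset.range m, ∫ z, g j z ∂J) + ∫ z, e z ∂J := by
    rw [← integral_finset_sum _ (fun j _ => hig j)]
    rw [← integral_add (integrable_finset_sum _ (fun j _ => hig j)) hie]
    apply integral_congr_ae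
    filter_upwards [hJ.2] with z hz
    have hz1 := hz.1
    simp only [hg, he, indI_cind]
    have : (∑ j ∈ Finset.range m, wA κ v z * cind (z.1 ∈ Ico (gridt δ j) (gridt δ (j+1))) * (z.2 - z.1))
        = wA κ v z * (∑ j ∈ Finset.range m, cind (z.1 ∈ Ico (gridt δ j) (gridt δ (j+1)))) * (z.2 - z.1) := by
      rw [Finset.mul_sum, Finset.sum_mul]
    rw [this, grid_sum hδ0 hm1]
    rcases lt_or_ge z.1 1 with h | h
    · rw [cind_pos ⟨hz1.1, h⟩, cind_neg (by simp [Set.mem_Ici]; linarith : ¬ z.1 ∈ Ici (1:ℝ))]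
      ring
    · rw [cind_neg (fun hc => absurd hc.2 (not_lt.2 h)), cind_pos (Set.mem_Ici.2 h)]
      have hz11 : z.1 = 1 := le_antisymm hz1.2 h
      ring
  have hend : ∫ z, e z ∂J ≤ 0 := by
    have : ∀ᵐ z ∂J, e z ≤ 0 := by
      filter_upwards [hJ.2] with z hz
      simp only [he, indI_cind]
      by_cases hm' : z.1 ∈ Ici (1:ℝ)
      · rw [cind_pos hm']
        have h1 : z.1 = 1 := le_antisymm hz.1.2 hm'
        have h2 : z.2 - z.1 ≤ 0 := by
          rcases hz.2 with h | h <;> rw [h, h1] <;> norm_num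
        have h3 := wA_nonneg (κ := κ) (v := v) z
        nlinarith
      · rw [cind_neg hm']
        simp
    calc ∫ z, e z ∂J ≤ ∫ _z, (0:ℝ) ∂J := integral_mono_ae hie (integrable_const 0) this
    _ = 0 := by simp
  have hwin : ∀ j ∈ Finset.range m, ∫ z, g j z ∂J ≤
      CDL K J + 4 * τ + (δ + τ) * ∫ z, indI (Ico (gridt δ j) (gridt δ (j+1))) z ∂J := by
    intro j hj
    have hjδ : (j:ℝ) * δ < 1 := by
      have h2 : (m:ℝ) < 1/δ + 1 := Nat.ceil_lt_add_one (le_trans zero_le_one h1δ)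
      have hjm : (j:ℝ) + 1 ≤ (m:ℝ) := by exact_mod_cast Finset.mem_range.1 hj
      have hjlt : (j:ℝ) < 1/δ := by linarith
      rw [← lt_div_iff₀ hδ0]
      exact hjlt
    apply window_bound hJ hK hκ hWm (gridt_nonneg hδ0 j)
      (gridt_lt_succ hδ0 hjδ)
      (gridt_le_one δ (j+1)) (gridt_succ_sub hδ0 j) hτ
  have hν : (∑ j ∈ Finset.range m, ∫ z, indI (Ico (gridt δ j) (gridt δ (j+1))) z ∂J) ≤ 1 := by
    rw [← integral_finset_sum _ (fun j _ => int_indI hJ measurableSet_Ico)]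
    calc ∫ z, (∑ j ∈ Finset.range m, indI (Ico (gridt δ j) (gridt δ (j+1))) z) ∂J
        ≤ ∫ _z, (1:ℝ) ∂J := by
          apply integral_mono_ae
            (integrable_finset_sum _ (fun j _ => int_indI hJ measurableSet_Ico))
            (integrable_const 1)
          apply Eventually.of_forall
          intro z
          show (∑ j ∈ Finset.range m, indI (Ico (gridt δ j) (gridt δ (j+1))) z) ≤ 1
          have : (∑ j ∈ Finset.range m, indI (Ico (gridt δ j) (gridt δ (j+1))) z)
              = cind (z.1 ∈ Ico (0:ℝ) 1) := by
            simp only [indI_cind]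
            exact grid_sum hδ0 hm1 z.1
          rw [this]
          exact cind_le_one _
    _ = 1 := by simp
  have hsum : (∑ j ∈ Finset.range m, ∫ z, g j z ∂J) ≤
      (m:ℝ) * (CDL K J + 4 * τ) + (δ + τ) *
        (∑ j ∈ Finset.range m, ∫ z, indI (Ico (gridt δ j) (gridt δ (j+1))) z ∂J) := by
    calc (∑ j ∈ Finset.range m, ∫ z, g j z ∂J)
        ≤ ∑ j ∈ Finset.range m, (CDL K J + 4 * τ +
            (δ + τ) * ∫ z, indI (Ico (gridt δ j) (gridt δ (j+1))) z ∂J) :=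
          Finset.sum_le_sum hwin
    _ = (m:ℝ) * (CDL K J + 4 * τ) + (δ + τ) *
          (∑ j ∈ Finset.range m, ∫ z, indI (Ico (gridt δ j) (gridt δ (j+1))) z ∂J) := by
        rw [Finset.sum_add_distrib, Finset.sum_const, Finset.card_range, ← Finset.mul_sum]
        push_cast
        ring
  have hνpos : 0 ≤ (∑ j ∈ Finset.range m, ∫ z, indI (Ico (gridt δ j) (gridt δ (j+1))) z ∂J) := by
    apply Finset.sum_nonneg
    intro j _
    apply integral_nonneg
    intro z
    exact indI_nonneg _ z
  have hδτ : 0 ≤ δ + τ := by positivity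
  have hmain : ∫ z, wA κ v z * (z.2 - z.1) ∂J ≤ (m:ℝ) * (CDL K J + 4 * τ) + (δ + τ) := by
    rw [hsplit]
    have h1 : (δ + τ) * (∑ j ∈ Finset.range m, ∫ z, indI (Ico (gridt δ j) (gridt δ (j+1))) z ∂J)
        ≤ (δ + τ) * 1 := mul_le_mul_of_nonneg_left hν hδτ
    linarith [hsum, hend]
  have hfinal : (m:ℝ) * (CDL K J + 4 * τ) ≤ (2/δ) * CDL K J + (2/δ) * 4 * τ := by
    have h1 : (m:ℝ) * (CDL K J + 4 * τ) ≤ (2/δ) * (CDL K J + 4 * τ) := by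
      apply mul_le_mul_of_nonneg_right hm2
      positivity
    linarith [h1]
  calc ∫ z, wA κ v z * (z.2 - z.1) ∂J ≤ (m:ℝ) * (CDL K J + 4 * τ) + (δ + τ) := hmain
  _ ≤ (2/δ) * CDL K J + (2/δ) * 4 * τ + δ + τ := by linarith
  _ = (2/δ) * CDL K J + δ + (2 / δ * 4 * τ + τ) := by ring
  _ = (2/δ) * CDL K J + δ + ε := by rw [hτval]

end Final

/-- upper-threshold calibration errors are bounded by `C·√(CDL_K(J))`. -/
theorem upper_threshold_CE_bound :
    ∃ C : ℝ, 0 < C ∧ ∀ (J : Measure (ℝ × ℝ)) (K : Set (ℝ → ℝ)),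
      IsPredDist J → ValidClass K →
      ∀ κ ∈ K, ∀ v ∈ Icc (0:ℝ) 1,
        (∫ z, Set.indicator {p : ℝ | v ≤ κ p} (fun _ => (1:ℝ)) z.1 * (z.2 - z.1) ∂J) ≤
          C * Real.sqrt (CDL K J) := by

  refine ⟨8, by norm_num, ?_⟩
  intro J K hJ hK κ hκ v _hv
  haveI := hJ.1
  have hD := CDL_nonneg (J := J) hJ hK
  have hRHS0 : 0 ≤ 8 * Real.sqrt (CDL K J) := by positivity
  show (∫ z, wA κ v z * (z.2 - z.1) ∂J) ≤ 8 * Real.sqrt (CDL K J)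
  by_cases hInt : Integrable (fun z => wA κ v z * (z.2 - z.1)) J
  swap
  · rw [integral_undef hInt]; exact hRHS0
  have hWm : AEStronglyMeasurable (wA κ v) J := wA_aesm hJ hInt.aestronglyMeasurable
  rcases eq_or_lt_of_le hD with hD0 | hD0
  · -- CDL = 0
    have h0 : ∀ δ : ℝ, 0 < δ → δ ≤ 1 → (∫ z, wA κ v z * (z.2 - z.1) ∂J) ≤ δ := by
      intro δ h1' h2'
      have hkey := key_estimate hJ hK hκ hWm hInt h1' h2'
      rw [← hD0] at hkey
      simpa using hkey
    have hle0 : (∫ z, wA κ v z * (z.2 - z.1) ∂J) ≤ 0 := by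
      apply le_of_forall_pos_le_add
      intro ε hε
      rcases le_or_gt ε 1 with h | h
      · calc (∫ z, wA κ v z * (z.2 - z.1) ∂J) ≤ ε := h0 ε hε h
        _ ≤ 0 + ε := by linarith
      · calc (∫ z, wA κ v z * (z.2 - z.1) ∂J) ≤ 1 := h0 1 one_pos (le_refl 1)
        _ ≤ 0 + ε := by linarith
    linarith
  · rcases le_or_gt 1 (CDL K J) with h1D | h1D
    · -- CDL ≥ 1
      have hT1 : (∫ z, wA κ v z * (z.2 - z.1) ∂J) ≤ 1 := by
        calc (∫ z, wA κ v z * (z.2 - z.1) ∂J) ≤ ∫ _z, (1:ℝ) ∂J := by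
              apply integral_mono_ae hInt (integrable_const 1)
              filter_upwards [hJ.2] with z hz
              have h1 := wA_nonneg (κ := κ) (v := v) z
              have h2 := wA_le_one (κ := κ) (v := v) z
              have h3 : z.2 - z.1 ≤ 1 := by
                rcases hz.2 with h | h <;> rw [h] <;> linarith [hz.1.1, hz.1.2]
              show wA κ v z * (z.2 - z.1) ≤ 1
              nlinarith
        _ = 1 := by simp
      have hsq : 1 ≤ Real.sqrt (CDL K J) := by
        rw [show (1:ℝ) = Real.sqrt 1 from Real.sqrt_one.symm]
        exact Real.sqrt_le_sqrt h1D
      nlinarith [Real.sqrt_nonneg (CDL K J)]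
    · -- 0 < CDL < 1 : take δ = √CDL
      have hs0 : 0 < Real.sqrt (CDL K J) := Real.sqrt_pos.2 hD0
      have hs1 : Real.sqrt (CDL K J) ≤ 1 := by
        rw [show (1:ℝ) = Real.sqrt 1 from Real.sqrt_one.symm]
        exact Real.sqrt_le_sqrt (le_of_lt h1D)
      have hkey := key_estimate hJ hK hκ hWm hInt hs0 hs1
      have hdiv : 2 / Real.sqrt (CDL K J) * CDL K J = 2 * Real.sqrt (CDL K J) := by
        rw [div_mul_eq_mul_div, mul_div_assoc, Real.div_sqrt]
      rw [hdiv] at hkey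
      nlinarith [Real.sqrt_nonneg (CDL K J)]
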